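/- arXiv:2604.12589 — 2 statements merged into one kernel-verified Lean document; each statement's English description precedes it below -/
import Mathlib

section
/- Let ℓ > 0, 1 < p < ∞, γ : ℝ → ℝ continuous, strictly increasing and surjective with γ(0) = 0, f ∈ L^1(0,ℓ) and a, b ∈ ℝ. For δ, ε ∈ ℝ, let v_{δ,ε} = γ ∘ u_{δ,ε} denote the weak solution of (P^{γ,f}_{p,a−δ,b+ε}), with u_{δ,ε} its C¹ representative. If 0 ≤ δ < ε, or 0 < δ ≤ ε, then u_{δ,ε}(ℓ) > u_{0,0}(ℓ). -/
open MeasureTheory Set Filter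

noncomputable section

/-- A connected compact metric graph: finite nonempty vertex set, finite edge set,
initial/terminal vertex maps without loops, positive edge lengths, no multiple edges,
and connectedness via paths of edges. -/
structure MetricGraph where
  V : Type
  E : Type
  fintypeV : Fintype V
  fintypeE : Fintype E
  nonemptyV : Nonempty V
  ι : E → V
  τ : E → V
  no_loops : ∀ e, ι e ≠ τ e
  len : E → ℝ
  len_pos : ∀ e, 0 < len e
  no_multi : ∀ e e', ({ι e, τ e} : Set V) = ({ι e', τ e'} : Set V) → e = e'
  connected : ∀ v w : V,
    Relation.ReflTransGen (fun a b => ∃ e, (ι e = a ∧ τ e = b) ∨ (ι e = b ∧ τ e = a)) v w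

/-- Sum over the edges of the graph. -/
def edgeSum (G : MetricGraph) (F : G.E → ℝ) : ℝ :=
  letI := G.fintypeE
  ∑ e, F e

/-- Sum over the vertices of the graph. -/
def vertexSum (G : MetricGraph) (F : G.V → ℝ) : ℝ :=
  letI := G.fintypeV
  ∑ v, F v

/-- Number of vertices. -/
def vertexCard (G : MetricGraph) : ℕ :=
  letI := G.fintypeV
  Fintype.card G.V

/-- ρ_p(r) = |r|^(p-2) r. -/
def rho (p r : ℝ) : ℝ := |r| ^ (p - 2) * r

/-- `(u, u')` is in the Sobolev space W^{1,p}(0,ℓ): `u'` is integrable with `|u'|^p`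
integrable on (0,ℓ), and `u` is absolutely continuous on [0,ℓ] with derivative `u'`. -/
def IntervalSobolev (ℓ p : ℝ) (u u' : ℝ → ℝ) : Prop :=
  IntegrableOn u' (Ioo 0 ℓ) volume ∧
  IntegrableOn (fun x => |u' x| ^ p) (Ioo 0 ℓ) volume ∧
  ∀ x ∈ Icc (0:ℝ) ℓ, u x = u 0 + ∫ t in (0:ℝ)..x, u' t

/-- `(u, u')` is in W^{1,p̄}(G), continuous at the vertices with vertex values `uV`. -/
def GraphSobolev (G : MetricGraph) (p : G.E → ℝ) (u u' : G.E → ℝ → ℝ) (uV : G.V → ℝ) : Prop :=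
  (∀ e, IntervalSobolev (G.len e) (p e) (u e) (u' e)) ∧
  (∀ e, u e 0 = uV (G.ι e)) ∧
  (∀ e, u e (G.len e) = uV (G.τ e))

/-- `v` is a weak solution of the graph problem (P_ω^f) with data `u, u', uV`. -/
def SolvesGraphProblem (G : MetricGraph) (p : G.E → ℝ) (γ : G.E → ℝ → ℝ)
    (f : G.E → ℝ → ℝ) (ω : G.V → ℝ)
    (v : G.E → ℝ → ℝ) (u u' : G.E → ℝ → ℝ) (uV : G.V → ℝ) : Prop :=
  (∀ e, IntegrableOn (v e) (Ioo 0 (G.len e)) volume) ∧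
  GraphSobolev G p u u' uV ∧
  (∀ e, ∀ᵐ x ∂(volume.restrict (Ioo 0 (G.len e))), v e x = γ e (u e x)) ∧
  ∀ φ φ' : G.E → ℝ → ℝ, ∀ φV : G.V → ℝ, GraphSobolev G p φ φ' φV →
    edgeSum G (fun e => ∫ x in Ioo 0 (G.len e), v e x * φ e x)
      + edgeSum G (fun e => ∫ x in Ioo 0 (G.len e), rho (p e) (u' e x) * φ' e x)
    = edgeSum G (fun e => ∫ x in Ioo 0 (G.len e), f e x * φ e x)
      + vertexSum G (fun w => ω w * φV w)

/-- `v` is a weak solution of the graph problem (P_ω^f). -/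
def IsGraphWeakSolution (G : MetricGraph) (p : G.E → ℝ) (γ : G.E → ℝ → ℝ)
    (f : G.E → ℝ → ℝ) (ω : G.V → ℝ) (v : G.E → ℝ → ℝ) : Prop :=
  ∃ u u' uV, SolvesGraphProblem G p γ f ω v u u' uV

/-- `v` is a weak solution of the interval Neumann problem (P^{γ,f}_{p,a,b}),
with associated Sobolev function `u` (derivative `u'`). -/
def SolvesNeumann (ℓ p : ℝ) (γ f : ℝ → ℝ) (a b : ℝ) (v u u' : ℝ → ℝ) : Prop :=
  IntegrableOn v (Ioo 0 ℓ) volume ∧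
  IntervalSobolev ℓ p u u' ∧
  (∀ᵐ x ∂(volume.restrict (Ioo 0 ℓ)), v x = γ (u x)) ∧
  ∀ φ φ' : ℝ → ℝ, IntervalSobolev ℓ p φ φ' →
    (∫ x in Ioo 0 ℓ, v x * φ x) + (∫ x in Ioo 0 ℓ, rho p (u' x) * φ' x)
    = (∫ x in Ioo 0 ℓ, f x * φ x) + a * φ 0 + b * φ ℓ

/-- `v` is a weak solution of the interval Neumann problem (P^{γ,f}_{p,a,b}). -/
def IsNeumannWeakSolution (ℓ p : ℝ) (γ f : ℝ → ℝ) (a b : ℝ) (v : ℝ → ℝ) : Prop :=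
  ∃ u u', SolvesNeumann ℓ p γ f a b v u u'

end

lemma abs_rho {p : ℝ} (hp : 1 < p) (r : ℝ) : |rho p r| = |r| ^ (p - 1) := by
  rcases eq_or_ne r 0 with h | h
  · simp [rho, h, Real.zero_rpow (by linarith : p - 1 ≠ 0)]
  · have h0 : (0:ℝ) < |r| := abs_pos.2 h
    rw [rho, abs_mul, abs_of_nonneg (Real.rpow_nonneg (abs_nonneg r) _),
      show p - 1 = p - 2 + 1 by ring, Real.rpow_add_one h0.ne']

lemma rho_continuous {p : ℝ} (hp : 1 < p) : Continuous (rho p) := by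
  rw [continuous_iff_continuousAt]
  intro a
  rcases eq_or_ne a 0 with rfl | h
  · have h0 : rho p 0 = 0 := by simp [rho]
    rw [ContinuousAt, h0, tendsto_zero_iff_norm_tendsto_zero]
    have : Tendsto (fun r : ℝ => |r| ^ (p - 1)) (nhds 0) (nhds 0) := by
      have hc : ContinuousAt (fun r : ℝ => |r| ^ (p - 1)) 0 := by
        exact (Real.continuousAt_rpow_const _ _ (Or.inr (by linarith))).comp
          continuous_abs.continuousAt
      have := hc.tendsto
      simpa [Real.zero_rpow (by linarith : p - 1 ≠ 0)] using this
    refine this.congr' ?_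
    filter_upwards with r using by rw [Real.norm_eq_abs, abs_rho hp]
  · exact ((Real.continuousAt_rpow_const _ _ (Or.inl (abs_ne_zero.2 h))).comp
      continuous_abs.continuousAt).mul continuousAt_id

lemma rho_pos {p : ℝ} {r : ℝ} (hr : 0 < r) : 0 < rho p r :=
  mul_pos (Real.rpow_pos_of_pos (abs_pos.2 hr.ne') _) hr

lemma rho_neg (p r : ℝ) : rho p (-r) = - rho p r := by simp [rho]

lemma rho_strictMono {p : ℝ} (hp : 1 < p) : StrictMono (rho p) := by
  have hpow : ∀ r : ℝ, 0 < r → rho p r = r ^ (p - 1) := by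
    intro r hr
    rw [rho, abs_of_pos hr, show p - 1 = p - 2 + 1 by ring, Real.rpow_add_one hr.ne']
  have hnn : ∀ r s : ℝ, 0 ≤ r → r < s → rho p r < rho p s := by
    intro r s hr hrs
    rcases eq_or_lt_of_le hr with rfl | hr'
    · simpa [rho] using rho_pos (p := p) hrs
    · rw [hpow r hr', hpow s (hr'.trans hrs)]
      exact Real.rpow_lt_rpow hr'.le hrs (by linarith)
  intro r s hrs
  rcases le_or_gt 0 r with hr | hr
  · exact hnn r s hr hrs
  · rcases le_or_gt s 0 with hs | hs
    · have := hnn (-s) (-r) (by linarith) (by linarith)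
      rw [rho_neg, rho_neg] at this; linarith
    · have h1 : rho p r < 0 := by
        have := rho_pos (p := p) (show (0:ℝ) < -r by linarith)
        rw [rho_neg] at this; linarith
      have h2 : 0 < rho p s := rho_pos hs
      linarith
lemma sobolev_continuousOn {ℓ p : ℝ} {φ φ' : ℝ → ℝ} (hℓ : 0 < ℓ)
    (h : IntervalSobolev ℓ p φ φ') : ContinuousOn φ (Icc 0 ℓ) := by
  have hi : IntegrableOn φ' (Icc 0 ℓ) volume :=
    (integrableOn_Icc_iff_integrableOn_Ioo).2 h.1
  have hc := intervalIntegral.continuousOn_primitive (f := φ') (a := 0) (b := ℓ) hi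
  have hc2 : ContinuousOn (fun x => φ 0 + ∫ t in Ioc (0:ℝ) x, φ' t) (Icc 0 ℓ) :=
    continuousOn_const.add hc
  refine hc2.congr ?_
  intro x hx
  rw [h.2.2 x hx, intervalIntegral.integral_of_le hx.1]

/-- a.e.-bound multiplication lemma specialized for our use. -/
lemma integrable_mul_of_bdd {ℓ : ℝ} (hℓ : 0 < ℓ) {g φ : ℝ → ℝ}
    (hg : IntegrableOn g (Ioo 0 ℓ) volume) (hφ : ContinuousOn φ (Icc 0 ℓ)) :
    Integrable (fun x => g x * φ x) (volume.restrict (Ioo 0 ℓ)) := by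
  obtain ⟨C, hC⟩ := isCompact_Icc.exists_bound_of_continuousOn hφ
  have hmeas : AEStronglyMeasurable φ (volume.restrict (Ioo 0 ℓ)) :=
    (hφ.mono Ioo_subset_Icc_self).aestronglyMeasurable measurableSet_Ioo
  have hbd : ∀ᵐ x ∂(volume.restrict (Ioo 0 ℓ)), ‖φ x‖ ≤ C :=
    (ae_restrict_iff' measurableSet_Ioo).2
      (ae_of_all _ fun x hx => hC x (Ioo_subset_Icc_self hx))
  have := Integrable.bdd_mul (f := φ) (g := g) hg hmeas hbd
  exact this.congr (ae_of_all _ fun x => mul_comm _ _)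

lemma ibp {ℓ p : ℝ} (hℓ : 0 < ℓ) {h φ φ' : ℝ → ℝ}
    (hh : IntegrableOn h (Ioo 0 ℓ) volume)
    (hφs : IntervalSobolev ℓ p φ φ') :
    ∫ x in Ioo 0 ℓ, h x * φ x
      = (∫ s in (0:ℝ)..ℓ, ((Ioo 0 ℓ).indicator h) s) * φ ℓ
        - ∫ t in Ioo 0 ℓ, (∫ s in (0:ℝ)..t, ((Ioo 0 ℓ).indicator h) s) * φ' t := by
  set μ := volume.restrict (Ioo 0 ℓ) with hμ
  set hI := (Ioo 0 ℓ).indicator h with hhI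
  set H := fun x : ℝ => ∫ s in (0:ℝ)..x, hI s with hH
  have hIint : Integrable hI volume := (integrable_indicator_iff measurableSet_Ioo).2 hh
  have hHcont : Continuous H := hIint.continuous_primitive 0
  -- H x = ∫ over Ioo 0 x of h, for x in Icc
  have hHeq : ∀ x ∈ Icc (0:ℝ) ℓ, H x = ∫ s in Ioo 0 x, h s := by
    intro x hx
    show (∫ s in (0:ℝ)..x, hI s) = _
    rw [intervalIntegral.integral_of_le hx.1, integral_Ioc_eq_integral_Ioo]
    exact setIntegral_congr_fun measurableSet_Ioo
      (fun s hs => indicator_of_mem (Ioo_subset_Ioo_right hx.2 hs) h)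
  -- H ℓ - H t = ∫ over Ioo t ℓ of h, for t in Ioo
  have hHsub : ∀ t ∈ Ioo (0:ℝ) ℓ, H ℓ - H t = ∫ s in Ioo t ℓ, h s := by
    intro t ht
    show (∫ s in (0:ℝ)..ℓ, hI s) - (∫ s in (0:ℝ)..t, hI s) = _
    rw [intervalIntegral.integral_interval_sub_left hIint.intervalIntegrable
      hIint.intervalIntegrable, intervalIntegral.integral_of_le ht.2.le,
      integral_Ioc_eq_integral_Ioo]
    exact setIntegral_congr_fun measurableSet_Ioo
      (fun s hs => indicator_of_mem (Ioo_subset_Ioo_left ht.1.le hs) h)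
  have hφc : ContinuousOn φ (Icc 0 ℓ) := sobolev_continuousOn hℓ hφs
  have hφint : Integrable (fun x => h x * φ x) μ := integrable_mul_of_bdd hℓ hh hφc
  -- Fubini
  have hprod : Integrable (fun q : ℝ × ℝ => h q.1 * φ' q.2) (μ.prod μ) :=
    Integrable.mul_prod hh hφs.1
  have hSmeas : MeasurableSet {q : ℝ × ℝ | 0 < q.2 ∧ q.2 < q.1} :=
    (measurableSet_lt measurable_const measurable_snd).inter
      (measurableSet_lt measurable_snd measurable_fst)
  have hGeq : (fun q : ℝ × ℝ => h q.1 * ((Ioo 0 q.1).indicator φ' q.2))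
      = ({q : ℝ × ℝ | 0 < q.2 ∧ q.2 < q.1}).indicator (fun q => h q.1 * φ' q.2) := by
    funext q
    by_cases hq : 0 < q.2 ∧ q.2 < q.1
    · rw [indicator_of_mem (show q ∈ {q : ℝ × ℝ | 0 < q.2 ∧ q.2 < q.1} from hq),
        indicator_of_mem (mem_Ioo.2 hq)]
    · rw [indicator_of_notMem (show q ∉ {q : ℝ × ℝ | 0 < q.2 ∧ q.2 < q.1} from hq),
        indicator_of_notMem (fun hm => hq (mem_Ioo.1 hm)), mul_zero]
  have hG : Integrable (fun q : ℝ × ℝ => h q.1 * ((Ioo 0 q.1).indicator φ' q.2)) (μ.prod μ) := by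
    rw [hGeq]; exact hprod.indicator hSmeas
  have hswap := integral_integral_swap (f := fun x t => h x * ((Ioo 0 x).indicator φ' t)) hG
  -- compute LHS of swap
  have hL : (∫ x, (∫ t, h x * ((Ioo 0 x).indicator φ' t) ∂μ) ∂μ)
      = ∫ x in Ioo 0 ℓ, h x * (φ x - φ 0) := by
    rw [hμ]
    refine setIntegral_congr_fun measurableSet_Ioo ?_
    intro x hx
    have : (∫ t, ((Ioo 0 x).indicator φ' t) ∂μ) = φ x - φ 0 := by
      rw [hμ, setIntegral_indicator measurableSet_Ioo,
        inter_eq_self_of_subset_right (Ioo_subset_Ioo_right hx.2.le)]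
      rw [hφs.2.2 x (Ioo_subset_Icc_self hx), intervalIntegral.integral_of_le hx.1.le,
        integral_Ioc_eq_integral_Ioo]
      ring
    dsimp only
    rw [← hμ, integral_const_mul, this]
  -- compute RHS of swap
  have hR : (∫ t, (∫ x, h x * ((Ioo 0 x).indicator φ' t) ∂μ) ∂μ)
      = ∫ t in Ioo 0 ℓ, (H ℓ - H t) * φ' t := by
    rw [hμ]
    refine setIntegral_congr_fun measurableSet_Ioo ?_
    intro t ht
    dsimp only
    have heq : (fun x => h x * ((Ioo 0 x).indicator φ' t))
        = (Ioi t).indicator (fun x => h x * φ' t) := by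
      funext x
      by_cases hm : t < x
      · rw [indicator_of_mem (mem_Ioo.2 ⟨ht.1, hm⟩), indicator_of_mem (mem_Ioi.2 hm)]
      · rw [indicator_of_notMem (fun hmm => hm (mem_Ioo.1 hmm).2),
          indicator_of_notMem (fun hmm => hm (mem_Ioi.1 hmm)), mul_zero]
    have h1 : ∫ x in Ioo 0 ℓ, h x * ((Ioo 0 x).indicator φ' t)
        = ∫ x in Ioo 0 ℓ, (Ioi t).indicator (fun x => h x * φ' t) x :=
      setIntegral_congr_fun measurableSet_Ioo (fun x _ => by rw [congrFun heq x])
    rw [← hμ, h1, setIntegral_indicator measurableSet_Ioi]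
    have hset : Ioo (0:ℝ) ℓ ∩ Ioi t = Ioo t ℓ := by
      ext x; simp only [mem_inter_iff, mem_Ioo, mem_Ioi]
      constructor
      · rintro ⟨⟨_, h2⟩, h3⟩; exact ⟨h3, h2⟩
      · rintro ⟨h1, h2⟩; exact ⟨⟨ht.1.trans h1, h2⟩, h1⟩
    rw [hset, integral_mul_const, hHsub t ht]
  -- integrabilities for splitting
  have hHbd : Integrable (fun t => H t * φ' t) μ := by
    obtain ⟨C, hC⟩ := isCompact_Icc.exists_bound_of_continuousOn
      (hHcont.continuousOn (s := Icc (0:ℝ) ℓ))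
    refine Integrable.bdd_mul (f := H) (c := C) hφs.1 (hHcont.aestronglyMeasurable) ?_
    exact (ae_restrict_iff' measurableSet_Ioo).2
      (ae_of_all _ fun x hx => hC x (Ioo_subset_Icc_self hx))
  have hsplit : ∫ t in Ioo 0 ℓ, (H ℓ - H t) * φ' t
      = H ℓ * (∫ t in Ioo 0 ℓ, φ' t) - ∫ t in Ioo 0 ℓ, H t * φ' t := by
    have : (fun t => (H ℓ - H t) * φ' t) = fun t => H ℓ * φ' t - H t * φ' t := by
      funext t; ring
    rw [this, integral_sub (hφs.1.const_mul _) hHbd, integral_const_mul]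
  have hφℓ : (∫ t in Ioo 0 ℓ, φ' t) = φ ℓ - φ 0 := by
    rw [← integral_Ioc_eq_integral_Ioo, ← intervalIntegral.integral_of_le hℓ.le,
      hφs.2.2 ℓ ⟨hℓ.le, le_refl ℓ⟩]
    ring
  -- assemble
  have hmain : ∫ x in Ioo 0 ℓ, h x * φ x
      = (∫ x in Ioo 0 ℓ, h x * φ 0) + ∫ x in Ioo 0 ℓ, h x * (φ x - φ 0) := by
    rw [← integral_add (hh.mul_const _)]
    · exact setIntegral_congr_fun measurableSet_Ioo (fun x _ => by ring)
    · have : (fun x => h x * (φ x - φ 0)) = fun x => h x * φ x - h x * φ 0 := by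
        funext x; ring
      rw [this]
      exact hφint.sub (hh.mul_const _)
  rw [hmain, ← hμ, ← hL, hswap, hR, hsplit, hφℓ, integral_mul_const]
  have hHℓ2 : H ℓ = ∫ x in Ioo 0 ℓ, h x := hHeq ℓ ⟨hℓ.le, le_refl ℓ⟩
  rw [← hHℓ2]
  ring

lemma sobolev_const_one {ℓ p : ℝ} :
    IntervalSobolev ℓ p (fun _ => (1:ℝ)) (fun _ => (0:ℝ)) :=
  ⟨(integrableOn_const_iff (by simp)).2 (Or.inr measure_Ioo_lt_top),
   (integrableOn_const_iff (by simp)).2 (Or.inr measure_Ioo_lt_top),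
   fun x _ => by simp⟩

lemma sobolev_id {ℓ p : ℝ} :
    IntervalSobolev ℓ p (fun x => x) (fun _ => (1:ℝ)) :=
  ⟨(integrableOn_const_iff (by simp)).2 (Or.inr measure_Ioo_lt_top),
   (integrableOn_const_iff (by simp)).2 (Or.inr measure_Ioo_lt_top),
   fun x _ => by simp⟩

lemma strong_form {ℓ p : ℝ} (hℓ : 0 < ℓ) (hp : 1 < p) {γ f : ℝ → ℝ}
    (hf : IntegrableOn f (Ioo 0 ℓ) volume) {a' b' : ℝ} {u u' : ℝ → ℝ}
    (hs : SolvesNeumann ℓ p γ f a' b' (fun x => γ (u x)) u u')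
    (hu'c : ContinuousOn u' (Icc 0 ℓ)) :
    (∀ x ∈ Icc (0:ℝ) ℓ, rho p (u' x)
        = (∫ t in (0:ℝ)..x, ((Ioo 0 ℓ).indicator (fun s => γ (u s) - f s)) t) - a')
    ∧ (∫ t in (0:ℝ)..ℓ, ((Ioo 0 ℓ).indicator (fun s => γ (u s) - f s)) t) = a' + b' := by
  have hv : IntegrableOn (fun x => γ (u x)) (Ioo 0 ℓ) volume := hs.1
  have hvf : IntegrableOn (fun s => γ (u s) - f s) (Ioo 0 ℓ) volume := hv.sub hf
  set hI := (Ioo 0 ℓ).indicator (fun s => γ (u s) - f s) with hhI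
  set H := fun x : ℝ => ∫ s in (0:ℝ)..x, hI s with hHdef
  have hIint : Integrable hI volume := (integrable_indicator_iff measurableSet_Ioo).2 hvf
  have hHcont : Continuous H := hIint.continuous_primitive 0
  set K := fun t : ℝ => rho p (u' t) - H t with hKdef
  have hKC : ContinuousOn K (Icc 0 ℓ) :=
    ((rho_continuous hp).comp_continuousOn hu'c).sub hHcont.continuousOn
  have hKint : IntegrableOn K (Icc 0 ℓ) volume := hKC.integrableOn_Icc
  -- the key derived identity
  have key : ∀ φ φ' : ℝ → ℝ, IntervalSobolev ℓ p φ φ' →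
      (∫ t in Ioo 0 ℓ, K t * φ' t) = a' * φ 0 + (b' - H ℓ) * φ ℓ := by
    intro φ φ' hφ
    have hw := hs.2.2.2 φ φ' hφ
    have hibp := ibp hℓ (h := fun s => γ (u s) - f s) hvf hφ
    have hφc := sobolev_continuousOn hℓ hφ
    have hsub : ∫ x in Ioo 0 ℓ, (γ (u x) - f x) * φ x
        = (∫ x in Ioo 0 ℓ, γ (u x) * φ x) - ∫ x in Ioo 0 ℓ, f x * φ x := by
      rw [← integral_sub (integrable_mul_of_bdd hℓ hv hφc) (integrable_mul_of_bdd hℓ hf hφc)]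
      exact setIntegral_congr_fun measurableSet_Ioo (fun x _ => by ring)
    have hGint : Integrable (fun t => rho p (u' t) * φ' t) (volume.restrict (Ioo 0 ℓ)) :=
      (integrable_mul_of_bdd hℓ hφ.1 ((rho_continuous hp).comp_continuousOn hu'c)).congr
        (ae_of_all _ fun x => mul_comm _ _)
    have hHint : Integrable (fun t => H t * φ' t) (volume.restrict (Ioo 0 ℓ)) :=
      (integrable_mul_of_bdd hℓ hφ.1 hHcont.continuousOn).congr
        (ae_of_all _ fun x => mul_comm _ _)
    have hsplit : (∫ t in Ioo 0 ℓ, K t * φ' t)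
        = (∫ t in Ioo 0 ℓ, rho p (u' t) * φ' t) - ∫ t in Ioo 0 ℓ, H t * φ' t := by
      rw [← integral_sub hGint hHint]
      exact setIntegral_congr_fun measurableSet_Ioo (fun x _ => by simp [hKdef]; ring)
    have hexp : a' * φ 0 + (b' - H ℓ) * φ ℓ = a' * φ 0 + b' * φ ℓ - H ℓ * φ ℓ := by ring
    rw [hsplit, hexp]
    rw [hsub] at hibp
    linarith [hw, hibp]
  -- Test 1 : φ = 1
  have hHl : H ℓ = a' + b' := by
    have h1 := key _ _ (sobolev_const_one (ℓ := ℓ) (p := p))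
    simp at h1
    linarith
  -- Test 2 : φ = id
  have hint0 : (∫ t in Ioo 0 ℓ, K t) = -a' * ℓ := by
    have h2 := key _ _ (sobolev_id (ℓ := ℓ) (p := p))
    simp only [mul_one, mul_zero, add_zero, zero_add] at h2
    rw [hHl] at h2
    rw [h2]; ring
  -- Test 3 : primitive of (-a' - K)
  have hvolIoo : (volume (Ioo (0:ℝ) ℓ)).toReal = ℓ := by
    rw [Real.volume_Ioo, sub_zero, ENNReal.toReal_ofReal hℓ.le]
  set proj := fun t : ℝ => max 0 (min t ℓ) with hproj
  have hprojc : Continuous proj := (continuous_const.max ((continuous_id.min continuous_const)))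
  have hprojmem : ∀ t, proj t ∈ Icc (0:ℝ) ℓ :=
    fun t => ⟨le_max_left _ _, max_le hℓ.le (min_le_right _ _)⟩
  have hprojeq : ∀ t ∈ Ioo (0:ℝ) ℓ, proj t = t := by
    intro t ht
    rw [hproj]; dsimp only
    rw [min_eq_left ht.2.le, max_eq_right ht.1.le]
  set ψ := fun t : ℝ => -a' - K (proj t) with hψ
  have hψc : Continuous ψ := continuous_const.sub (hKC.comp_continuous hprojc hprojmem)
  have sob3 : IntervalSobolev ℓ p (fun x => ∫ s in (0:ℝ)..x, ψ s) ψ := by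
    refine ⟨hψc.integrableOn_Icc.mono_set Ioo_subset_Icc_self, ?_, ?_⟩
    · exact ((hψc.abs.rpow_const (fun x => Or.inr (by linarith))).integrableOn_Icc).mono_set
        Ioo_subset_Icc_self
    · intro x hx; simp
  have h3 := key _ _ sob3
  have hφ30 : (∫ s in (0:ℝ)..(0:ℝ), ψ s) = 0 := intervalIntegral.integral_same
  have hKint' : IntegrableOn K (Ioo 0 ℓ) volume := hKint.mono_set Ioo_subset_Icc_self
  have hψint : (∫ t in Ioo 0 ℓ, (-a' - K t)) = 0 := by
    rw [integral_sub ((integrableOn_const_iff (C := -a') (by simp)).2 (Or.inr measure_Ioo_lt_top)) hKint', hint0,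
      setIntegral_const, measureReal_def, hvolIoo]
    simp only [smul_eq_mul]
    ring
  have hφ3ℓ : (∫ s in (0:ℝ)..ℓ, ψ s) = 0 := by
    have ha : (∫ t in Ioo (0:ℝ) ℓ, ψ t) = ∫ t in Ioo (0:ℝ) ℓ, (-a' - K t) := by
      refine setIntegral_congr_fun measurableSet_Ioo ?_
      intro t ht
      rw [hψ]; dsimp only
      rw [hprojeq t ht]
    rw [intervalIntegral.integral_of_le hℓ.le, integral_Ioc_eq_integral_Ioo, ha, hψint]
  rw [hφ30, hφ3ℓ, mul_zero, mul_zero, add_zero] at h3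
  -- h3 : ∫ K t * ψ t = 0
  have h1 : (∫ t in Ioo 0 ℓ, K t * (-a' - K t)) = 0 := by
    have ha : (∫ t in Ioo (0:ℝ) ℓ, K t * (-a' - K t)) = ∫ t in Ioo (0:ℝ) ℓ, K t * ψ t := by
      refine setIntegral_congr_fun measurableSet_Ioo ?_
      intro t ht
      rw [hψ]; dsimp only
      rw [hprojeq t ht]
    rw [ha, h3]
  -- ∫ (K + a')^2 = 0
  have hKK : IntegrableOn (fun t => K t * (-a' - K t)) (Ioo 0 ℓ) volume :=
    ((hKC.mul (continuousOn_const.sub hKC)).integrableOn_Icc).mono_set Ioo_subset_Icc_self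
  have hsq : (∫ t in Ioo 0 ℓ, (K t + a')^2) = 0 := by
    have hcongr : ∀ t, (K t + a')^2 = -(K t * (-a' - K t)) - a' * (-a' - K t) := by
      intro t; ring
    have e : (∫ t in Ioo (0:ℝ) ℓ, (K t + a')^2)
        = ∫ t in Ioo (0:ℝ) ℓ, (-(K t * (-a' - K t)) - a' * (-a' - K t)) :=
      setIntegral_congr_fun measurableSet_Ioo (fun t _ => hcongr t)
    have hint1 : Integrable (fun t => -(K t * (-a' - K t))) (volume.restrict (Ioo 0 ℓ)) :=
      hKK.neg
    have hint2 : Integrable (fun t => a' * (-a' - K t)) (volume.restrict (Ioo 0 ℓ)) := by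
      have hsubint : IntegrableOn (fun t => -a' - K t) (Ioo 0 ℓ) volume :=
        ((continuousOn_const.sub hKC).integrableOn_Icc).mono_set Ioo_subset_Icc_self
      exact hsubint.const_mul a'
    rw [e, integral_sub hint1 hint2, integral_neg, h1, integral_const_mul, hψint]
    ring
  have hsqint : IntegrableOn (fun t => (K t + a')^2) (Ioo 0 ℓ) volume :=
    (((hKC.add continuousOn_const).pow 2).integrableOn_Icc).mono_set Ioo_subset_Icc_self
  have hae : ∀ᵐ t ∂(volume.restrict (Ioo 0 ℓ)), (K t + a')^2 = 0 :=
    (integral_eq_zero_iff_of_nonneg (fun t => sq_nonneg _) hsqint).1 hsq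
  have hKa : volume {t | ¬ (t ∈ Ioo (0:ℝ) ℓ → K t = -a')} = 0 := by
    have h' : ∀ᵐ t ∂(volume.restrict (Ioo 0 ℓ)), K t = -a' := by
      filter_upwards [hae] with t ht
      have := pow_eq_zero_iff (n := 2) (by norm_num) |>.1 ht
      linarith
    exact ae_iff.1 ((ae_restrict_iff' measurableSet_Ioo).1 h')
  have hKicc : ∀ x ∈ Icc (0:ℝ) ℓ, K x = -a' := by
    intro x hx
    by_contra hne
    have hx' : ContinuousWithinAt K (Icc 0 ℓ) x := hKC x hx
    have hmem : {z : ℝ | z ≠ -a'} ∈ nhds (K x) := isOpen_ne.mem_nhds hne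
    have hpre : K ⁻¹' {z | z ≠ -a'} ∈ nhdsWithin x (Ioo 0 ℓ) :=
      nhdsWithin_mono x Ioo_subset_Icc_self (hx' hmem)
    obtain ⟨U, hUopen, hxU, hUsub⟩ := mem_nhdsWithin.1 hpre
    have hclos : x ∈ closure (Ioo (0:ℝ) ℓ) := by
      rw [closure_Ioo hℓ.ne]; exact hx
    have hne2 : (U ∩ Ioo 0 ℓ).Nonempty := mem_closure_iff.1 hclos U hUopen hxU
    have hvolpos : 0 < volume (U ∩ Ioo 0 ℓ) := (hUopen.inter isOpen_Ioo).measure_pos volume hne2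
    refine absurd ?_ hvolpos.ne'
    refine measure_mono_null ?_ hKa
    intro t ht
    intro himp
    exact hUsub ⟨ht.1, ht.2⟩ (himp ht.2)
  constructor
  · intro x hx
    have := hKicc x hx
    rw [hKdef] at this
    dsimp only at this
    linarith [this]
  · exact hHl


/-- Remark 3.2: if v_{δ,ε} = γ∘u_{δ,ε} solves (P^{γ,f}_{p,a−δ,b+ε}) and
0 ≤ δ < ε or 0 < δ ≤ ε, then u_{δ,ε}(ℓ) > u_{0,0}(ℓ). -/
theorem neumann_perturbed_two_parameters
    (ℓ : ℝ) (hℓ : 0 < ℓ) (p : ℝ) (hp : 1 < p)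
    (γ : ℝ → ℝ) (hγc : Continuous γ) (hγm : StrictMono γ)
    (hγs : Function.Surjective γ) (hγ0 : γ 0 = 0)
    (f : ℝ → ℝ) (hf : IntegrableOn f (Ioo 0 ℓ) volume) (a b : ℝ)
    (u u' : ℝ → ℝ → ℝ → ℝ)
    (hsol : ∀ δ ε : ℝ,
      SolvesNeumann ℓ p γ f (a - δ) (b + ε) (fun x => γ (u δ ε x)) (u δ ε) (u' δ ε))
    (hC1 : ∀ δ ε : ℝ, ContinuousOn (u' δ ε) (Icc 0 ℓ)) :
    ∀ δ ε : ℝ, ((0 ≤ δ ∧ δ < ε) ∨ (0 < δ ∧ δ ≤ ε)) → u 0 0 ℓ < u δ ε ℓ := by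
  intro δ ε hcase
  have hδε : δ ≤ ε := by rcases hcase with ⟨_, h⟩ | ⟨_, h⟩; exacts [h.le, h]
  have hε : 0 < ε := by
    rcases hcase with ⟨h0, h⟩ | ⟨h0, h⟩
    exacts [lt_of_le_of_lt h0 h, lt_of_lt_of_le h0 h]
  by_contra hcon
  push_neg at hcon
  -- strong forms for both solutions
  obtain ⟨sf1, sf1ℓ⟩ := strong_form hℓ hp hf (hsol δ ε) (hC1 δ ε)
  obtain ⟨sf0, sf0ℓ⟩ := strong_form hℓ hp hf (hsol 0 0) (hC1 0 0)
  set g1 := (Ioo 0 ℓ).indicator (fun s => γ (u δ ε s) - f s) with hg1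
  set g0 := (Ioo 0 ℓ).indicator (fun s => γ (u 0 0 s) - f s) with hg0
  have hg1int : Integrable g1 volume :=
    (integrable_indicator_iff measurableSet_Ioo).2 ((hsol δ ε).1.sub hf)
  have hg0int : Integrable g0 volume :=
    (integrable_indicator_iff measurableSet_Ioo).2 ((hsol 0 0).1.sub hf)
  set q := (Ioo 0 ℓ).indicator (fun s => γ (u 0 0 s) - γ (u δ ε s)) with hq
  have hqint : Integrable q volume :=
    (integrable_indicator_iff measurableSet_Ioo).2 ((hsol 0 0).1.sub (hsol δ ε).1)
  set D := fun x : ℝ => rho p (u' δ ε x) - rho p (u' 0 0 x) with hD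
  have hDc : ContinuousOn D (Icc 0 ℓ) :=
    ((rho_continuous hp).comp_continuousOn (hC1 δ ε)).sub
      ((rho_continuous hp).comp_continuousOn (hC1 0 0))
  have hl0 : ℓ ∈ Icc (0:ℝ) ℓ := ⟨hℓ.le, le_rfl⟩
  have h00 : (0:ℝ) ∈ Icc (0:ℝ) ℓ := ⟨le_rfl, hℓ.le⟩
  have hDl : D ℓ = ε := by
    rw [hD]; dsimp only
    rw [sf1 ℓ hl0, sf0 ℓ hl0, sf1ℓ, sf0ℓ]; ring
  have hD0 : D 0 = δ := by
    rw [hD]; dsimp only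
    rw [sf1 0 h00, sf0 0 h00]
    simp only [intervalIntegral.integral_same]
    ring
  -- difference of D values as an interval integral of q
  have hDsub : ∀ x y : ℝ, 0 ≤ x → x ≤ y → y ≤ ℓ →
      D x - D y = ∫ s in x..y, q s := by
    intro x y hx hxy hyl
    have hxI : x ∈ Icc (0:ℝ) ℓ := ⟨hx, hxy.trans hyl⟩
    have hyI : y ∈ Icc (0:ℝ) ℓ := ⟨hx.trans hxy, hyl⟩
    have e1 : rho p (u' δ ε y) - rho p (u' δ ε x) = ∫ s in x..y, g1 s := by
      rw [sf1 y hyI, sf1 x hxI, sub_sub_sub_cancel_right,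
        intervalIntegral.integral_interval_sub_left hg1int.intervalIntegrable
          hg1int.intervalIntegrable]
    have e0 : rho p (u' 0 0 y) - rho p (u' 0 0 x) = ∫ s in x..y, g0 s := by
      rw [sf0 y hyI, sf0 x hxI, sub_sub_sub_cancel_right,
        intervalIntegral.integral_interval_sub_left hg0int.intervalIntegrable
          hg0int.intervalIntegrable]
    have hind : ∀ s : ℝ, g0 s - g1 s = q s := by
      intro s
      by_cases hm : s ∈ Ioo (0:ℝ) ℓ
      · rw [hg0, hg1, hq, indicator_of_mem hm, indicator_of_mem hm, indicator_of_mem hm]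
        ring
      · rw [hg0, hg1, hq, indicator_of_notMem hm, indicator_of_notMem hm,
          indicator_of_notMem hm, sub_zero]
    have e2 : (∫ s in x..y, q s) = (∫ s in x..y, g0 s) - ∫ s in x..y, g1 s := by
      rw [← intervalIntegral.integral_sub hg0int.intervalIntegrable
        hg1int.intervalIntegrable]
      exact intervalIntegral.integral_congr (fun s _ => (hind s).symm)
    rw [e2, hD]; dsimp only
    rw [← e0, ← e1]; ring
  -- integral representation of u differences
  have hiint : ∀ δ' ε' : ℝ, ∀ x ∈ Icc (0:ℝ) ℓ, ∀ y ∈ Icc (0:ℝ) ℓ, x ≤ y →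
      u δ' ε' y - u δ' ε' x = ∫ s in x..y, u' δ' ε' s := by
    intro δ' ε' x hx y hy hxy
    have hrep := (hsol δ' ε').2.1.2.2
    have hii : ∀ z ∈ Icc (0:ℝ) ℓ, IntervalIntegrable (u' δ' ε') volume 0 z := by
      intro z hz
      refine ContinuousOn.intervalIntegrable ?_
      rw [uIcc_of_le hz.1]
      exact (hC1 δ' ε').mono (Icc_subset_Icc le_rfl hz.2)
    rw [hrep y hy, hrep x hx]
    rw [show u δ' ε' 0 + (∫ s in (0:ℝ)..y, u' δ' ε' s)
        - (u δ' ε' 0 + ∫ s in (0:ℝ)..x, u' δ' ε' s)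
        = (∫ s in (0:ℝ)..y, u' δ' ε' s) - ∫ s in (0:ℝ)..x, u' δ' ε' s from by ring]
    exact intervalIntegral.integral_interval_sub_left (hii y hy) (hii x hx)
  -- find the pivot point x₀
  obtain ⟨x₀, hx₀I, hx₀ℓ, hx₀ε, hpos⟩ : ∃ x₀ : ℝ, x₀ ∈ Icc (0:ℝ) ℓ ∧ x₀ < ℓ ∧ D x₀ ≤ ε ∧
      ∀ t ∈ Ioc x₀ ℓ, 0 < D t := by
    by_cases hT : {x | x ∈ Icc (0:ℝ) ℓ ∧ D x ≤ 0}.Nonempty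
    · set T := {x | x ∈ Icc (0:ℝ) ℓ ∧ D x ≤ 0} with hTdef
      have hTsub : T ⊆ Icc (0:ℝ) ℓ := fun t ht => ht.1
      have hTc : IsClosed T := by
        have heq : T = Icc (0:ℝ) ℓ ∩ D ⁻¹' (Iic 0) := by
          ext t
          simp only [hTdef, mem_setOf_eq, mem_inter_iff, mem_preimage, mem_Iic]
        rw [heq]
        exact hDc.preimage_isClosed_of_isClosed isClosed_Icc isClosed_Iic
      have hTcompact : IsCompact T := isCompact_Icc.of_isClosed_subset hTc hTsub
      have hx₀T : sSup T ∈ T := hTcompact.sSup_mem hT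
      have hx₀ℓ : sSup T < ℓ := by
        refine lt_of_le_of_ne hx₀T.1.2 ?_
        intro he
        have h2 := hx₀T.2
        rw [he, hDl] at h2
        linarith
      refine ⟨sSup T, hx₀T.1, hx₀ℓ, hx₀T.2.trans hε.le, ?_⟩
      intro t ht
      by_contra hle
      have htT : t ∈ T := ⟨⟨le_trans hx₀T.1.1 ht.1.le, ht.2⟩, not_lt.1 hle⟩
      have := le_csSup hTcompact.bddAbove htT
      linarith [ht.1]
    · refine ⟨0, h00, hℓ, by rw [hD0]; exact hδε, ?_⟩
      intro t ht
      by_contra hle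
      exact hT ⟨t, ⟨⟨ht.1.le, ht.2⟩, not_lt.1 hle⟩⟩
  -- the derivative comparison on (x₀, ℓ]
  have hw' : ∀ t ∈ Ioc x₀ ℓ, u' 0 0 t < u' δ ε t := by
    intro t ht
    have h2 := hpos t ht
    rw [hD] at h2; dsimp only at h2
    exact (rho_strictMono hp).lt_iff_lt.1 (by linarith)
  -- the value comparison on [x₀, ℓ)
  have hγlt : ∀ x ∈ Ico x₀ ℓ, γ (u 0 0 x) - γ (u δ ε x) > 0 := by
    intro x hx
    have hxI : x ∈ Icc (0:ℝ) ℓ := ⟨hx₀I.1.trans hx.1, hx.2.le⟩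
    have h1 := hiint δ ε x hxI ℓ hl0 hx.2.le
    have h0 := hiint 0 0 x hxI ℓ hl0 hx.2.le
    have hii : ∀ δ' ε' : ℝ, IntervalIntegrable (u' δ' ε') volume x ℓ := by
      intro δ' ε'
      refine ContinuousOn.intervalIntegrable ?_
      rw [uIcc_of_le hx.2.le]
      exact (hC1 δ' ε').mono (Icc_subset_Icc hxI.1 le_rfl)
    have hpos2 : 0 < ∫ s in x..ℓ, (u' δ ε s - u' 0 0 s) := by
      refine intervalIntegral.intervalIntegral_pos_of_pos_on ((hii δ ε).sub (hii 0 0)) ?_ hx.2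
      intro t ht'
      exact sub_pos.2 (hw' t ⟨lt_of_le_of_lt hx.1 ht'.1, ht'.2.le⟩)
    rw [intervalIntegral.integral_sub (hii δ ε) (hii 0 0), ← h1, ← h0] at hpos2
    have hwx : u δ ε x < u 0 0 x := by linarith
    have := hγm hwx
    linarith
  -- final contradiction via integral positivity of q on (x₀, ℓ)
  have hfinal : 0 < ∫ s in x₀..ℓ, q s := by
    refine intervalIntegral.intervalIntegral_pos_of_pos_on hqint.intervalIntegrable ?_ hx₀ℓ
    intro s hs
    have hsm : s ∈ Ioo (0:ℝ) ℓ := ⟨lt_of_le_of_lt hx₀I.1 hs.1, hs.2⟩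
    rw [hq, indicator_of_mem hsm]
    exact hγlt s ⟨hs.1.le, hs.2⟩
  have hDd := hDsub x₀ ℓ hx₀I.1 hx₀ℓ.le le_rfl
  rw [hDl] at hDd
  linarith
end

section
/- Let G be a connected compact metric graph with exponents p̄ and nonlinearities γ_e as above. Suppose v = (v_e) and v̂ = (v̂_e) (v_e, v̂_e ∈ L^1(0,ℓ_e)), w = (w_e) and ŵ = (ŵ_e) with w_e, ŵ_e ∈ L^1(0,ℓ_e), and ω, ω̂ : V → ℝ are such that v is a weak solution of (P_ω^{v+w}) and v̂ is a weak solution of (P_{ω̂}^{v̂+ŵ}) (that is, with right-hand sides v + w and v̂ + ŵ respectively). Then for every λ > 0: Σ_{e∈E} ∫₀^{ℓ_e} (v_e − v̂_e)⁺ ≤ Σ_{e∈E} ∫₀^{ℓ_e} (v_e − v̂_e + λ(w_e − ŵ_e))⁺ + λ Σ_{v∈V} (ω(v) − ω̂(v))⁺. (T-accretivity of the doubly nonlinear diffusion operator on G.) -/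
open MeasureTheory Set Filter

noncomputable section

namespace GraphAccretive

/-- a smooth bump, nonneg, supported in `[0,1]`. -/
def bump (s : ℝ) : ℝ := Real.smoothTransition s * Real.smoothTransition (1 - s)

lemma bump_cont : Continuous bump :=
  (Real.smoothTransition.continuous).mul
    (Real.smoothTransition.continuous.comp (continuous_const.sub continuous_id))

lemma bump_nonneg (s : ℝ) : 0 ≤ bump s :=
  mul_nonneg (Real.smoothTransition.nonneg _) (Real.smoothTransition.nonneg _)

lemma bump_le_one (s : ℝ) : bump s ≤ 1 :=
  mul_le_one₀ (Real.smoothTransition.le_one _) (Real.smoothTransition.nonneg _)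
    (Real.smoothTransition.le_one _)

lemma bump_eq_zero_of_nonpos {s : ℝ} (h : s ≤ 0) : bump s = 0 := by
  simp [bump, Real.smoothTransition.zero_of_nonpos h]

lemma bump_eq_zero_of_one_le {s : ℝ} (h : 1 ≤ s) : bump s = 0 := by
  simp [bump, Real.smoothTransition.zero_of_nonpos (by linarith : 1 - s ≤ 0)]

lemma bump_intervalIntegrable (a b : ℝ) : IntervalIntegrable bump volume a b :=
  bump_cont.intervalIntegrable a b

/-- the mass of the bump. -/
def bumpC : ℝ := ∫ s in (0:ℝ)..1, bump s

lemma bumpC_pos : 0 < bumpC := by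
  apply intervalIntegral.intervalIntegral_pos_of_pos_on (bump_intervalIntegrable 0 1)
    _ one_pos
  intro x hx
  exact mul_pos (Real.smoothTransition.pos_of_pos hx.1)
    (Real.smoothTransition.pos_of_pos (by linarith [hx.2]))

/-- smooth approximation of the Heaviside function. -/
def Qfun (t : ℝ) : ℝ := (∫ s in (0:ℝ)..t, bump s) / bumpC

lemma Qfun_hasDerivAt (t : ℝ) : HasDerivAt Qfun (bump t / bumpC) t := by
  have h : HasDerivAt (fun t => ∫ s in (0:ℝ)..t, bump s) (bump t) t :=
    intervalIntegral.integral_hasDerivAt_right (bump_intervalIntegrable 0 t)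
      bump_cont.stronglyMeasurable.stronglyMeasurableAtFilter bump_cont.continuousAt
  have h2 := h.mul_const (bumpC⁻¹)
  have e : Qfun = fun y => (∫ s in (0:ℝ)..y, bump s) * bumpC⁻¹ := by
    funext y
    simp [Qfun, div_eq_mul_inv]
  rw [div_eq_mul_inv, e]
  exact h2

lemma Qfun_mono : Monotone Qfun := by
  intro a b hab
  have h : (∫ s in (0:ℝ)..a, bump s) ≤ ∫ s in (0:ℝ)..b, bump s := by
    rw [← intervalIntegral.integral_add_adjacent_intervals
      (bump_intervalIntegrable 0 a) (bump_intervalIntegrable a b)]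
    have : 0 ≤ ∫ s in a..b, bump s :=
      intervalIntegral.integral_nonneg hab (fun s _ => bump_nonneg s)
    linarith
  exact div_le_div_of_nonneg_right h bumpC_pos.le

lemma Qfun_zero_of_nonpos {t : ℝ} (h : t ≤ 0) : Qfun t = 0 := by
  have : (∫ s in (0:ℝ)..t, bump s) = 0 := by
    rw [intervalIntegral.integral_symm]
    rw [show (∫ s in t..(0:ℝ), bump s) = ∫ s in t..(0:ℝ), (0:ℝ) from
      intervalIntegral.integral_congr (fun s hs => ?_)]
    · simp
    · rw [uIcc_of_le h] at hs
      exact bump_eq_zero_of_nonpos hs.2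
  simp [Qfun, this]

lemma Qfun_one_of_one_le {t : ℝ} (h : 1 ≤ t) : Qfun t = 1 := by
  have : (∫ s in (0:ℝ)..t, bump s) = bumpC := by
    rw [← intervalIntegral.integral_add_adjacent_intervals
      (bump_intervalIntegrable 0 1) (bump_intervalIntegrable 1 t)]
    have h2 : (∫ s in (1:ℝ)..t, bump s) = 0 := by
      rw [show (∫ s in (1:ℝ)..t, bump s) = ∫ s in (1:ℝ)..t, (0:ℝ) from
        intervalIntegral.integral_congr (fun s hs => ?_)]
      · simp
      · rw [uIcc_of_le h] at hs
        exact bump_eq_zero_of_one_le hs.1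
    rw [h2, add_zero]; rfl
  simp [Qfun, this, div_self bumpC_pos.ne']

lemma Qfun_nonneg (t : ℝ) : 0 ≤ Qfun t := by
  have := Qfun_mono (min_le_right 0 t)
  rwa [Qfun_zero_of_nonpos (min_le_left 0 t)] at this

lemma Qfun_le_one (t : ℝ) : Qfun t ≤ 1 := by
  have := Qfun_mono (le_max_right 1 t)
  rwa [Qfun_one_of_one_le (le_max_left 1 t)] at this


/-- The Stieltjes function associated to a continuous monotone function. -/
def toStieltjes (F : ℝ → ℝ) (hm : Monotone F) (hc : Continuous F) : StieltjesFunction ℝ :=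
  ⟨F, hm, fun x => (hc.continuousAt).continuousWithinAt⟩

lemma toStieltjes_apply (F : ℝ → ℝ) (hm : Monotone F) (hc : Continuous F) (x : ℝ) :
    toStieltjes F hm hc x = F x := rfl

/-- FTC a.e. for primitives of nonnegative measurable integrable functions. -/
lemma ae_hasDerivAt_primitive_nonneg {ρ : ℝ → ℝ} (hmeas : Measurable ρ)
    (hint : Integrable ρ volume) (hnn : ∀ x, 0 ≤ ρ x) :
    ∀ᵐ x, HasDerivAt (fun y => ∫ t in (0:ℝ)..y, ρ t) (ρ x) x := by
  set F : ℝ → ℝ := fun y => ∫ t in (0:ℝ)..y, ρ t with hF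
  have hii : ∀ a b : ℝ, IntervalIntegrable ρ volume a b := fun a b => hint.intervalIntegrable
  have hmono : Monotone F := by
    intro a b hab
    have h0 : 0 ≤ ∫ s in a..b, ρ s :=
      intervalIntegral.integral_nonneg hab (fun s _ => hnn s)
    have := intervalIntegral.integral_add_adjacent_intervals (hii 0 a) (hii a b)
    simp only [hF]; rw [← this]; linarith
  have hcont : Continuous F := intervalIntegral.continuous_primitive hii 0
  set S : StieltjesFunction ℝ := toStieltjes F hmono hcont with hS
  have hSmeas : S.measure = volume.withDensity (fun x => ENNReal.ofReal (ρ x)) := by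
    refine Measure.ext_of_Ioc _ _ (fun a b hab => ?_)
    rw [S.measure_Ioc, withDensity_apply _ measurableSet_Ioc,
      ← ofReal_integral_eq_lintegral_ofReal (hint.integrableOn)
        (ae_of_all _ (fun x => hnn x))]
    congr 1
    have h1 : S b - S a = ∫ s in a..b, ρ s := by
      rw [toStieltjes_apply, toStieltjes_apply, hF]
      rw [← intervalIntegral.integral_interval_sub_left (hii 0 b) (hii 0 a)]
    rw [h1, intervalIntegral.integral_of_le hab.le]
  have hrn : (Measure.rnDeriv S.measure volume) =ᵐ[volume] fun x => ENNReal.ofReal (ρ x) := by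
    rw [hSmeas]
    exact Measure.rnDeriv_withDensity volume (hmeas.ennreal_ofReal)
  filter_upwards [S.ae_hasDerivAt, hrn] with x hx h2
  rw [h2] at hx
  rw [ENNReal.toReal_ofReal (hnn x)] at hx
  exact hx

/-- FTC a.e. for primitives of integrable functions. -/
lemma ae_hasDerivAt_primitive {h : ℝ → ℝ} (hint : Integrable h volume) :
    ∀ᵐ x, HasDerivAt (fun y => ∫ t in (0:ℝ)..y, h t) (h x) x := by
  set g : ℝ → ℝ := hint.1.mk h with hg
  have hgm : Measurable g := hint.1.stronglyMeasurable_mk.measurable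
  have hgae : h =ᵐ[volume] g := hint.1.ae_eq_mk
  have hgint : Integrable g volume := hint.congr hgae
  have hprim : (fun y => ∫ t in (0:ℝ)..y, h t) = fun y => ∫ t in (0:ℝ)..y, g t := by
    funext y
    exact intervalIntegral.integral_congr_ae (hgae.mono fun x hx _ => hx)
  set ρ₁ : ℝ → ℝ := fun x => max (g x) 0 with hρ₁
  set ρ₂ : ℝ → ℝ := fun x => max (-g x) 0 with hρ₂
  have hm₁ : Measurable ρ₁ := hgm.max measurable_const
  have hm₂ : Measurable ρ₂ := hgm.neg.max measurable_const
  have hi₁ : Integrable ρ₁ volume := hgint.pos_part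
  have hi₂ : Integrable ρ₂ volume := hgint.neg.pos_part
  have hsub : ∀ x, g x = ρ₁ x - ρ₂ x := fun x => (max_zero_sub_max_neg_zero_eq_self (g x)).symm
  have hps : (fun y => ∫ t in (0:ℝ)..y, g t)
      = fun y => (∫ t in (0:ℝ)..y, ρ₁ t) - ∫ t in (0:ℝ)..y, ρ₂ t := by
    funext y
    rw [← intervalIntegral.integral_sub (hi₁.intervalIntegrable) (hi₂.intervalIntegrable)]
    exact intervalIntegral.integral_congr (fun x _ => hsub x)
  filter_upwards [ae_hasDerivAt_primitive_nonneg hm₁ hi₁ (fun x => le_max_right _ _),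
    ae_hasDerivAt_primitive_nonneg hm₂ hi₂ (fun x => le_max_right _ _), hgae] with x h1 h2 h3
  rw [hprim, hps]
  have := h1.sub h2
  rw [show ρ₁ x - ρ₂ x = g x from (hsub x).symm, ← h3] at this
  exact this

/-- FTC inequality for continuous monotone functions. -/
lemma integral_Ioc_le_of_monotone {F D : ℝ → ℝ} {a b : ℝ} (hm : Monotone F)
    (hc : Continuous F) (hD : ∀ᵐ x, HasDerivAt F (D x) x) (hab : a ≤ b) :
    ∫ x in Ioc a b, D x ≤ F b - F a := by
  set S : StieltjesFunction ℝ := toStieltjes F hm hc with hS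
  have h1 : ∀ᵐ x, D x = (Measure.rnDeriv S.measure volume x).toReal := by
    filter_upwards [S.ae_hasDerivAt, hD] with x h2 h3
    exact h3.unique h2
  rw [setIntegral_congr_ae measurableSet_Ioc (h1.mono fun x hx _ => hx)]
  have h2 : ∫ x in Ioc a b, (Measure.rnDeriv S.measure volume x).toReal =
      (∫⁻ x in Ioc a b, Measure.rnDeriv S.measure volume x).toReal :=
    integral_toReal (Measure.measurable_rnDeriv _ _).aemeasurable
      (ae_restrict_of_ae (Measure.rnDeriv_lt_top _ _))
  rw [h2]
  have h3 := Measure.setLIntegral_rnDeriv_le (μ := S.measure) (ν := volume) (Ioc a b)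
  have h4 : S.measure (Ioc a b) = ENNReal.ofReal (F b - F a) := S.measure_Ioc a b
  calc (∫⁻ x in Ioc a b, Measure.rnDeriv S.measure volume x).toReal
      ≤ (S.measure (Ioc a b)).toReal :=
        ENNReal.toReal_mono (by rw [h4]; exact ENNReal.ofReal_ne_top) h3
    _ = F b - F a := by
        rw [h4]; exact ENNReal.toReal_ofReal (by have := hm hab; linarith)


/-- Chain rule / FTC for a composition of a `C¹` function with bounded derivative with a
primitive of an integrable function. -/
lemma primitive_comp_eq {h q q' : ℝ → ℝ} {M : ℝ} (hint : Integrable h volume)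
    (hq : ∀ t, HasDerivAt q (q' t) t) (hq'c : Continuous q')
    (hM : ∀ t, |q' t| ≤ M) (c : ℝ) {x : ℝ} (hx : 0 ≤ x) :
    q (c + ∫ t in (0:ℝ)..x, h t) =
      q c + ∫ t in Ioc (0:ℝ) x, q' (c + ∫ s in (0:ℝ)..t, h s) * h t := by
  have hM0 : 0 ≤ M := (abs_nonneg _).trans (hM 0)
  set g : ℝ → ℝ := fun y => c + ∫ t in (0:ℝ)..y, h t with hgdef
  have hg0 : g 0 = c := by simp [hgdef]
  have habs : Integrable (fun t => M * |h t|) volume := hint.abs.const_mul M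
  set G : ℝ → ℝ := fun y => ∫ t in (0:ℝ)..y, M * |h t| with hGdef
  have hG0 : G 0 = 0 := by simp [hGdef]
  have hqdiff : Differentiable ℝ q := fun t => (hq t).differentiableAt
  have hqc : Continuous q := hqdiff.continuous
  have hgcont : Continuous g := continuous_const.add
    (intervalIntegral.continuous_primitive (fun a b => hint.intervalIntegrable) 0)
  have hGcont : Continuous G :=
    intervalIntegral.continuous_primitive (fun a b => habs.intervalIntegrable) 0
  -- Lipschitz property of q
  have hqlip : ∀ s t : ℝ, |q t - q s| ≤ M * |t - s| := by
    intro s t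
    have := (convex_univ : Convex ℝ (univ : Set ℝ)).norm_image_sub_le_of_norm_hasDerivWithin_le
      (f := q) (f' := q') (fun y _ => (hq y).hasDerivWithinAt)
      (fun y _ => by simpa using hM y) (mem_univ s) (mem_univ t)
    simpa [Real.norm_eq_abs] using this
  -- increments
  have hginc : ∀ a b : ℝ, a ≤ b → |g b - g a| ≤ ∫ t in a..b, |h t| := by
    intro a b hab
    have h1 : g b - g a = ∫ t in a..b, h t := by
      simp only [hgdef, add_sub_add_left_eq_sub]
      rw [intervalIntegral.integral_interval_sub_left hint.intervalIntegrable
        hint.intervalIntegrable]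
    rw [h1]
    exact intervalIntegral.abs_integral_le_integral_abs hab
  have hGinc : ∀ a b : ℝ, G b - G a = M * ∫ t in a..b, |h t| := by
    intro a b
    have h1 : G b - G a = ∫ t in a..b, M * |h t| :=
      intervalIntegral.integral_interval_sub_left habs.intervalIntegrable
        habs.intervalIntegrable
    rw [h1, intervalIntegral.integral_const_mul]
  -- the two monotone functions
  have key : ∀ a b : ℝ, a ≤ b → |q (g b) - q (g a)| ≤ G b - G a := by
    intro a b hab
    rw [hGinc a b]
    calc |q (g b) - q (g a)| ≤ M * |g b - g a| := hqlip _ _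
      _ ≤ M * ∫ t in a..b, |h t| := by
          exact mul_le_mul_of_nonneg_left (hginc a b hab) hM0
  have hmono₁ : Monotone (fun y => G y + q (g y)) := by
    intro a b hab
    have := key a b hab
    have h2 := abs_le.mp this
    simp only
    linarith [h2.1]
  have hmono₂ : Monotone (fun y => G y - q (g y)) := by
    intro a b hab
    have h2 := abs_le.mp (key a b hab)
    simp only
    linarith [h2.2]
  -- a.e. derivatives
  have hder₁ : ∀ᵐ y, HasDerivAt (fun y => G y + q (g y))
      (M * |h y| + q' (g y) * h y) y := by
    filter_upwards [ae_hasDerivAt_primitive hint, ae_hasDerivAt_primitive habs] with y h1 h2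
    exact h2.add (((hq (g y)).comp y ((hasDerivAt_const y c).add h1)).congr_deriv (by ring))
  have hder₂ : ∀ᵐ y, HasDerivAt (fun y => G y - q (g y))
      (M * |h y| - q' (g y) * h y) y := by
    filter_upwards [ae_hasDerivAt_primitive hint, ae_hasDerivAt_primitive habs] with y h1 h2
    exact h2.sub (((hq (g y)).comp y ((hasDerivAt_const y c).add h1)).congr_deriv (by ring))
  -- integrability
  have hqg_int : Integrable (fun t => q' (g t) * h t) volume :=
    hint.bdd_mul (hq'c.comp hgcont).aestronglyMeasurable
      (ae_of_all _ fun t => by simpa [Real.norm_eq_abs] using hM (g t))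
  have habs_Ioc : ∫ t in Ioc (0:ℝ) x, M * |h t| = G x := by
    rw [hGdef]
    simp only
    rw [intervalIntegral.integral_of_le hx]
  have hsplit₁ : ∫ t in Ioc (0:ℝ) x, (M * |h t| + q' (g t) * h t)
      = G x + ∫ t in Ioc (0:ℝ) x, q' (g t) * h t := by
    rw [integral_add habs.integrableOn hqg_int.integrableOn, habs_Ioc]
  have hsplit₂ : ∫ t in Ioc (0:ℝ) x, (M * |h t| - q' (g t) * h t)
      = G x - ∫ t in Ioc (0:ℝ) x, q' (g t) * h t := by
    rw [integral_sub habs.integrableOn hqg_int.integrableOn, habs_Ioc]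
  have hc₁ : Continuous (fun y => G y + q (g y)) := hGcont.add (hqc.comp hgcont)
  have hc₂ : Continuous (fun y => G y - q (g y)) := hGcont.sub (hqc.comp hgcont)
  have hineq₁ := integral_Ioc_le_of_monotone hmono₁ hc₁ hder₁ hx
  have hineq₂ := integral_Ioc_le_of_monotone hmono₂ hc₂ hder₂ hx
  rw [hsplit₁] at hineq₁
  rw [hsplit₂] at hineq₂
  simp only [hG0, hg0] at hineq₁ hineq₂
  have hgoal : ∫ t in Ioc (0:ℝ) x, q' (c + ∫ s in (0:ℝ)..t, h s) * h t
      = ∫ t in Ioc (0:ℝ) x, q' (g t) * h t := rfl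
  show q (g x) = q c + _
  rw [hgoal]
  linarith


lemma rho_neg (p r : ℝ) : rho p (-r) = - rho p r := by
  simp [rho, abs_neg]

lemma rho_of_nonneg {p r : ℝ} (hp : 1 < p) (hr : 0 ≤ r) : rho p r = r ^ (p - 1) := by
  rcases eq_or_lt_of_le hr with h | h
  · rw [← h]
    simp [rho, Real.zero_rpow (by linarith : p - 1 ≠ 0)]
  · rw [rho, abs_of_pos h, show p - 1 = p - 2 + 1 by ring, Real.rpow_add_one h.ne']

lemma rho_nonneg {p r : ℝ} (hp : 1 < p) (hr : 0 ≤ r) : 0 ≤ rho p r := by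
  rw [rho_of_nonneg hp hr]; exact Real.rpow_nonneg hr _

lemma rho_mono {p : ℝ} (hp : 1 < p) : Monotone (rho p) := by
  have key : ∀ a b : ℝ, 0 ≤ a → a ≤ b → rho p a ≤ rho p b := by
    intro a b ha hab
    rw [rho_of_nonneg hp ha, rho_of_nonneg hp (ha.trans hab)]
    exact Real.rpow_le_rpow ha hab (by linarith)
  intro a b hab
  rcases le_total 0 a with ha | ha
  · exact key a b ha hab
  · rcases le_total 0 b with hb | hb
    · calc rho p a = - rho p (-a) := by rw [rho_neg]; ring
        _ ≤ 0 := by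
            have := rho_nonneg hp (by linarith : (0:ℝ) ≤ -a)
            linarith
        _ ≤ rho p b := rho_nonneg hp hb
    · have := key (-b) (-a) (by linarith) (by linarith)
      rw [rho_neg, rho_neg] at this
      linarith

lemma rho_mul_nonneg {p : ℝ} (hp : 1 < p) (a b : ℝ) :
    0 ≤ (rho p a - rho p b) * (a - b) := by
  rcases le_total b a with h | h
  · exact mul_nonneg (by linarith [rho_mono hp h]) (by linarith)
  · nlinarith [rho_mono hp h]

lemma abs_rho_le {p : ℝ} (hp : 1 < p) (r : ℝ) : |rho p r| ≤ |r| ^ (p - 1) := by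
  calc |rho p r| = |r| ^ (p - 2) * |r| := by
        rw [rho, abs_mul, abs_of_nonneg (Real.rpow_nonneg (abs_nonneg r) _)]
    _ = rho p |r| := by rw [rho, abs_abs]
    _ ≤ |r| ^ (p - 1) := le_of_eq (rho_of_nonneg hp (abs_nonneg r))

lemma measurable_rho (p : ℝ) : Measurable (rho p) :=
  (measurable_abs.pow measurable_const).mul measurable_id

/-- elementary Young-type inequality. -/
lemma rpow_mul_young {p a b : ℝ} (hp : 1 < p) (ha : 0 ≤ a) (hb : 0 ≤ b) :
    a ^ (p - 1) * b ≤ a ^ p + b ^ p := by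
  rcases le_total b a with h | h
  · calc a ^ (p - 1) * b ≤ a ^ (p - 1) * a :=
        mul_le_mul_of_nonneg_left h (Real.rpow_nonneg ha _)
      _ = a ^ p := by
          rcases eq_or_lt_of_le ha with h0 | h0
          · rw [← h0]
            simp [Real.zero_rpow (by linarith : p - 1 ≠ 0),
              Real.zero_rpow (by linarith : p ≠ 0)]
          · rw [← Real.rpow_add_one h0.ne']; ring_nf
      _ ≤ a ^ p + b ^ p := by linarith [Real.rpow_nonneg hb p]
  · calc a ^ (p - 1) * b ≤ b ^ (p - 1) * b :=
        mul_le_mul_of_nonneg_right (Real.rpow_le_rpow ha h (by linarith)) hb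
      _ = b ^ p := by
          rcases eq_or_lt_of_le hb with h0 | h0
          · rw [← h0]
            simp [Real.zero_rpow (by linarith : p - 1 ≠ 0),
              Real.zero_rpow (by linarith : p ≠ 0)]
          · rw [← Real.rpow_add_one h0.ne']; ring_nf
      _ ≤ a ^ p + b ^ p := by linarith [Real.rpow_nonneg ha p]

lemma add_rpow_le {p a b : ℝ} (hp : 0 ≤ p) (ha : 0 ≤ a) (hb : 0 ≤ b) :
    (a + b) ^ p ≤ 2 ^ p * (a ^ p + b ^ p) := by
  have h1 : a + b ≤ 2 * max a b := by
    rcases le_total a b with h | h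
    · rw [max_eq_right h]; linarith
    · rw [max_eq_left h]; linarith
  calc (a + b) ^ p ≤ (2 * max a b) ^ p :=
      Real.rpow_le_rpow (by linarith) h1 hp
    _ = 2 ^ p * (max a b) ^ p :=
      Real.mul_rpow (by norm_num) (le_max_of_le_left ha)
    _ ≤ 2 ^ p * (a ^ p + b ^ p) := by
      apply mul_le_mul_of_nonneg_left _ (Real.rpow_nonneg (by norm_num) p)
      rcases le_total a b with h | h
      · rw [max_eq_right h]; linarith [Real.rpow_nonneg ha p]
      · rw [max_eq_left h]; linarith [Real.rpow_nonneg hb p]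


lemma edgeSum_congr (G : MetricGraph) {F F' : G.E → ℝ} (h : ∀ e, F e = F' e) :
    edgeSum G F = edgeSum G F' := by
  unfold edgeSum; exact Finset.sum_congr rfl fun e _ => h e

lemma edgeSum_add (G : MetricGraph) (F F' : G.E → ℝ) :
    edgeSum G (fun e => F e + F' e) = edgeSum G F + edgeSum G F' := by
  unfold edgeSum; exact Finset.sum_add_distrib

lemma edgeSum_sub (G : MetricGraph) (F F' : G.E → ℝ) :
    edgeSum G (fun e => F e - F' e) = edgeSum G F - edgeSum G F' := by
  unfold edgeSum; rw [Finset.sum_sub_distrib]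

lemma edgeSum_le (G : MetricGraph) {F F' : G.E → ℝ} (h : ∀ e, F e ≤ F' e) :
    edgeSum G F ≤ edgeSum G F' := by
  unfold edgeSum; exact Finset.sum_le_sum fun e _ => h e

lemma edgeSum_const_mul (G : MetricGraph) (c : ℝ) (F : G.E → ℝ) :
    edgeSum G (fun e => c * F e) = c * edgeSum G F := by
  unfold edgeSum; rw [Finset.mul_sum]

lemma edgeSum_tendsto (G : MetricGraph) {F : ℕ → G.E → ℝ} {L : G.E → ℝ}
    (h : ∀ e, Filter.Tendsto (fun n => F n e) Filter.atTop (nhds (L e))) :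
    Filter.Tendsto (fun n => edgeSum G (F n)) Filter.atTop (nhds (edgeSum G L)) := by
  unfold edgeSum
  exact tendsto_finset_sum _ fun e _ => h e

lemma vertexSum_sub (G : MetricGraph) (F F' : G.V → ℝ) :
    vertexSum G (fun z => F z - F' z) = vertexSum G F - vertexSum G F' := by
  unfold vertexSum; rw [Finset.sum_sub_distrib]

lemma vertexSum_congr (G : MetricGraph) {F F' : G.V → ℝ} (h : ∀ z, F z = F' z) :
    vertexSum G F = vertexSum G F' := by
  unfold vertexSum; exact Finset.sum_congr rfl fun z _ => h z

lemma vertexSum_le (G : MetricGraph) {F F' : G.V → ℝ} (h : ∀ z, F z ≤ F' z) :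
    vertexSum G F ≤ vertexSum G F' := by
  unfold vertexSum; exact Finset.sum_le_sum fun z _ => h z


end GraphAccretive

end

open GraphAccretive
open scoped Topology

/-- T-accretivity of the doubly nonlinear diffusion operator on G:
if v solves (P_ω^{v+w}) and v̂ solves (P_ω̂^{v̂+ŵ}), then for every λ > 0 the positive
parts satisfy the resolvent-type inequality. -/
theorem graph_operator_T_accretive
    (G : MetricGraph) (p : G.E → ℝ) (hp : ∀ e, 1 < p e)
    (γ : G.E → ℝ → ℝ)
    (hγ : ∀ e, Continuous (γ e) ∧ StrictMono (γ e) ∧ Function.Surjective (γ e) ∧ γ e 0 = 0)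
    (v vh w wh : G.E → ℝ → ℝ) (ω ωh : G.V → ℝ)
    (hw : ∀ e, IntegrableOn (w e) (Ioo 0 (G.len e)) volume)
    (hwh : ∀ e, IntegrableOn (wh e) (Ioo 0 (G.len e)) volume)
    (h₁ : IsGraphWeakSolution G p γ (fun e x => v e x + w e x) ω v)
    (h₂ : IsGraphWeakSolution G p γ (fun e x => vh e x + wh e x) ωh vh) :
    ∀ lam : ℝ, 0 < lam →
      edgeSum G (fun e => ∫ x in Ioo (0:ℝ) (G.len e), max (v e x - vh e x) 0)
        ≤ edgeSum G (fun e => ∫ x in Ioo (0:ℝ) (G.len e),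
            max (v e x - vh e x + lam * (w e x - wh e x)) 0)
          + lam * vertexSum G (fun z => max (ω z - ωh z) 0) := by
  intro lam hlam
  letI := G.fintypeE
  letI := G.fintypeV
  obtain ⟨u, u', uV, hv_int, ⟨hSob, hι, hτ⟩, hvγ, hweak⟩ := h₁
  obtain ⟨ub, ub', ubV, hvh_int, ⟨hSobh, hιh, hτh⟩, hvhγ, hweakh⟩ := h₂
  set ℓ : G.E → ℝ := G.len with hℓdef
  have hℓ : ∀ e, 0 < ℓ e := G.len_pos
  -- the difference of the derivatives, extended by 0
  set Hd : G.E → ℝ → ℝ :=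
    fun e => (Ioo (0:ℝ) (ℓ e)).indicator (fun t => u' e t - ub' e t) with hHddef
  have hHdInt : ∀ e, Integrable (Hd e) volume := by
    intro e
    rw [hHddef]
    exact (integrable_indicator_iff measurableSet_Ioo).2 ((hSob e).1.sub ((hSobh e).1))
  -- the difference of the Sobolev functions, as a globally defined primitive
  set Δ : G.E → ℝ → ℝ :=
    fun e y => (uV (G.ι e) - ubV (G.ι e)) + ∫ t in (0:ℝ)..y, Hd e t with hΔdef
  have hΔ0 : ∀ e, Δ e 0 = uV (G.ι e) - ubV (G.ι e) := by
    intro e; rw [hΔdef]; simp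
  have hΔcont : ∀ e, Continuous (Δ e) := by
    intro e
    exact continuous_const.add
      (intervalIntegral.continuous_primitive (fun a b => (hHdInt e).intervalIntegrable) 0)
  -- intermediate: interval integrals of indicator vs original
  have hind : ∀ e (f : ℝ → ℝ), IntegrableOn f (Ioo 0 (ℓ e)) volume → ∀ x ∈ Icc (0:ℝ) (ℓ e),
      (∫ t in (0:ℝ)..x, (Ioo (0:ℝ) (ℓ e)).indicator f t) = ∫ t in (0:ℝ)..x, f t := by
    intro e f _ x hx
    rw [intervalIntegral.integral_of_le hx.1, intervalIntegral.integral_of_le hx.1,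
      integral_Ioc_eq_integral_Ioo, integral_Ioc_eq_integral_Ioo]
    apply setIntegral_congr_fun measurableSet_Ioo
    intro t ht
    obtain ⟨ht1, ht2⟩ := ht
    exact indicator_of_mem (show t ∈ Ioo (0:ℝ) (ℓ e) from ⟨ht1, lt_of_lt_of_le ht2 hx.2⟩) f
  have hΔeq : ∀ e, ∀ x ∈ Icc (0:ℝ) (ℓ e), Δ e x = u e x - ub e x := by
    intro e x hx
    have h1 : (∫ t in (0:ℝ)..x, Hd e t) = (∫ t in (0:ℝ)..x, u' e t) - ∫ t in (0:ℝ)..x, ub' e t := by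
      rw [hHddef]
      have h2 := hind e (fun t => u' e t - ub' e t) ((hSob e).1.sub ((hSobh e).1)) x hx
      rw [h2]
      rw [intervalIntegral.integral_of_le hx.1, intervalIntegral.integral_of_le hx.1,
        intervalIntegral.integral_of_le hx.1, integral_Ioc_eq_integral_Ioo,
        integral_Ioc_eq_integral_Ioo, integral_Ioc_eq_integral_Ioo]
      exact integral_sub ((hSob e).1.mono_set (Ioo_subset_Ioo le_rfl hx.2))
        ((hSobh e).1.mono_set (Ioo_subset_Ioo le_rfl hx.2))
    have h3 := (hSob e).2.2 x hx
    have h4 := (hSobh e).2.2 x hx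
    rw [hΔdef]
    simp only
    rw [h1]
    have h5 := hι e
    have h6 := hιh e
    linarith [h3, h4]
  have hΔℓ : ∀ e, Δ e (ℓ e) = uV (G.τ e) - ubV (G.τ e) := by
    intro e
    rw [hΔeq e (ℓ e) ⟨(hℓ e).le, le_rfl⟩, hτ e, hτh e]
  have hΔd : ∀ e, ∀ᵐ y, HasDerivAt (Δ e) (Hd e y) y := by
    intro e
    filter_upwards [ae_hasDerivAt_primitive (hHdInt e)] with y hy
    have : HasDerivAt (fun y => (uV (G.ι e) - ubV (G.ι e)) + ∫ t in (0:ℝ)..y, Hd e t)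
        (0 + Hd e y) y := (hasDerivAt_const y _).add hy
    rw [zero_add] at this
    exact this
  -- approximations of the Heaviside function
  set Qn : ℕ → ℝ → ℝ := fun n t => Qfun (((n:ℝ)+1) * t) with hQndef
  set Qn' : ℕ → ℝ → ℝ := fun n t => ((n:ℝ)+1) * (bump (((n:ℝ)+1)*t) / bumpC) with hQn'def
  have hQderiv : ∀ n t, HasDerivAt (Qn n) (Qn' n t) t := by
    intro n t
    have h1 : HasDerivAt (fun t : ℝ => ((n:ℝ)+1) * t) ((n:ℝ)+1) t := by
      simpa using (hasDerivAt_id t).const_mul ((n:ℝ)+1)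
    have h2 := (Qfun_hasDerivAt (((n:ℝ)+1)*t)).comp t h1
    have h3 : (Qn' n t) = bump (((n:ℝ)+1)*t) / bumpC * ((n:ℝ)+1) := by
      rw [hQn'def]; ring
    rw [h3]
    exact h2
  have hQ'cont : ∀ n, Continuous (Qn' n) := by
    intro n
    rw [hQn'def]
    exact continuous_const.mul ((bump_cont.comp (continuous_const.mul continuous_id)).div_const _)
  have hQ'nonneg : ∀ n t, 0 ≤ Qn' n t := by
    intro n t
    rw [hQn'def]
    exact mul_nonneg (by positivity) (div_nonneg (bump_nonneg _) bumpC_pos.le)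
  set Mn : ℕ → ℝ := fun n => ((n:ℝ)+1) / bumpC with hMndef
  have hMn_nonneg : ∀ n, 0 ≤ Mn n := fun n => div_nonneg (by positivity) bumpC_pos.le
  have hQ'bound : ∀ n t, |Qn' n t| ≤ Mn n := by
    intro n t
    rw [abs_of_nonneg (hQ'nonneg n t), hQn'def, hMndef]
    simp only
    calc ((n:ℝ)+1) * (bump (((n:ℝ)+1)*t) / bumpC) ≤ ((n:ℝ)+1) * (1 / bumpC) := by
          apply mul_le_mul_of_nonneg_left _ (by positivity)
          exact div_le_div_of_nonneg_right (bump_le_one _) bumpC_pos.le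
      _ = ((n:ℝ)+1) / bumpC := by ring
  have hQ01 : ∀ n t, 0 ≤ Qn n t ∧ Qn n t ≤ 1 :=
    fun n t => ⟨Qfun_nonneg _, Qfun_le_one _⟩
  -- the limit indicator
  set χ : G.E → ℝ → ℝ := fun e x => if 0 < Δ e x then (1:ℝ) else 0 with hχdef
  have hχ01 : ∀ e x, 0 ≤ χ e x ∧ χ e x ≤ 1 := by
    intro e x; rw [hχdef]; dsimp only; split <;> norm_num
  have hχmeas : ∀ e, Measurable (χ e) := by
    intro e
    rw [hχdef]
    exact Measurable.ite (measurableSet_lt measurable_const (hΔcont e).measurable)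
      measurable_const measurable_const
  have hQlim : ∀ t : ℝ, Tendsto (fun n : ℕ => Qfun (((n:ℝ)+1) * t)) atTop
      (𝓝 (if 0 < t then (1:ℝ) else 0)) := by
    intro t
    split
    case isTrue h =>
      obtain ⟨N, hN⟩ := exists_nat_ge (1/t)
      have hev : (fun _ : ℕ => (1:ℝ)) =ᶠ[atTop] (fun n : ℕ => Qfun (((n:ℝ)+1) * t)) := by
        filter_upwards [eventually_ge_atTop N] with n hn
        refine (Qfun_one_of_one_le ?_).symm
        have h3 : (1/t) ≤ (n:ℝ) := le_trans hN (by exact_mod_cast hn)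
        rw [div_le_iff₀ h] at h3
        nlinarith
      exact Tendsto.congr' hev tendsto_const_nhds
    case isFalse h =>
      push_neg at h
      have hz : ∀ n : ℕ, Qfun (((n:ℝ)+1) * t) = 0 := fun n =>
        Qfun_zero_of_nonpos (mul_nonpos_of_nonneg_of_nonpos
          (by positivity : (0:ℝ) ≤ (n:ℝ)+1) h)
      simp only [hz]
      exact tendsto_const_nhds
  have hQcont : ∀ n : ℕ, Continuous (Qn n) := fun n =>
    Differentiable.continuous (fun t => (hQderiv n t).differentiableAt)
  have hHdIoo : ∀ e, ∀ x ∈ Ioo (0:ℝ) (ℓ e), Hd e x = u' e x - ub' e x := by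
    intro e x hx
    rw [hHddef]
    exact indicator_of_mem hx _
  -- The main inequality for each n
  have key_n : ∀ n : ℕ,
      - vertexSum G (fun z => max (ω z - ωh z) 0)
        ≤ edgeSum G (fun e => ∫ x in Ioo (0:ℝ) (ℓ e), (w e x - wh e x) * Qn n (Δ e x)) := by
    intro n
    set φ : G.E → ℝ → ℝ := fun e y => Qn n (Δ e y) with hφdef
    set φ' : G.E → ℝ → ℝ := fun e y => Qn' n (Δ e y) * Hd e y with hφ'def
    set φV : G.V → ℝ := fun z => Qn n (uV z - ubV z) with hφVdef
    have hφcont : ∀ e, Continuous (φ e) := fun e => (hQcont n).comp (hΔcont e)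
    have hφbdd01 : ∀ e y, 0 ≤ φ e y ∧ φ e y ≤ 1 := fun e y => hQ01 n (Δ e y)
    have hφ'int : ∀ e, Integrable (φ' e) volume := by
      intro e
      exact (hHdInt e).bdd_mul ((hQ'cont n).comp (hΔcont e)).aestronglyMeasurable
        (ae_of_all _ fun y => by
          simpa [Real.norm_eq_abs] using hQ'bound n (Δ e y))
    have hφ'p : ∀ e, IntegrableOn (fun y => |φ' e y| ^ (p e)) (Ioo 0 (ℓ e)) volume := by
      intro e
      have hbound : ∀ᵐ y ∂(volume.restrict (Ioo (0:ℝ) (ℓ e))),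
          ‖|φ' e y| ^ (p e)‖ ≤ ((Mn n) ^ (p e) * (2:ℝ) ^ (p e)) *
            (|u' e y| ^ (p e) + |ub' e y| ^ (p e)) := by
        filter_upwards [ae_restrict_mem measurableSet_Ioo] with y hy
        rw [Real.norm_eq_abs, abs_of_nonneg (Real.rpow_nonneg (abs_nonneg _) _)]
        have h1 : |φ' e y| ≤ Mn n * (|u' e y| + |ub' e y|) := by
          rw [hφ'def]
          simp only
          rw [abs_mul, hHdIoo e y hy]
          exact mul_le_mul (hQ'bound n _) (abs_sub _ _) (abs_nonneg _) (hMn_nonneg n)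
        calc |φ' e y| ^ (p e) ≤ (Mn n * (|u' e y| + |ub' e y|)) ^ (p e) :=
              Real.rpow_le_rpow (abs_nonneg _) h1 (by linarith [hp e])
          _ = (Mn n) ^ (p e) * (|u' e y| + |ub' e y|) ^ (p e) :=
              Real.mul_rpow (hMn_nonneg n) (by positivity)
          _ ≤ (Mn n) ^ (p e) * ((2:ℝ) ^ (p e) * (|u' e y| ^ (p e) + |ub' e y| ^ (p e))) :=
              mul_le_mul_of_nonneg_left
                (add_rpow_le (by linarith [hp e]) (abs_nonneg _) (abs_nonneg _))
                (Real.rpow_nonneg (hMn_nonneg n) _)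
          _ = ((Mn n) ^ (p e) * (2:ℝ) ^ (p e)) * (|u' e y| ^ (p e) + |ub' e y| ^ (p e)) := by
              ring
      have hmeas : AEStronglyMeasurable (fun y => |φ' e y| ^ (p e))
          (volume.restrict (Ioo (0:ℝ) (ℓ e))) := by
        have h2 : AEMeasurable (φ' e) (volume.restrict (Ioo (0:ℝ) (ℓ e))) :=
          (hφ'int e).aemeasurable.restrict
        exact ((measurable_abs.comp_aemeasurable h2).pow aemeasurable_const).aestronglyMeasurable
      exact Integrable.mono'
        ((((hSob e).2.1).add ((hSobh e).2.1)).const_mul ((Mn n) ^ (p e) * (2:ℝ) ^ (p e)))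
        hmeas hbound
    have hGSφ : GraphSobolev G p φ φ' φV := by
      refine ⟨fun e => ⟨(hφ'int e).integrableOn, hφ'p e, ?_⟩, fun e => ?_, fun e => ?_⟩
      · intro x hx
        have hchain := primitive_comp_eq (hHdInt e) (hQderiv n) (hQ'cont n)
          (hQ'bound n) (uV (G.ι e) - ubV (G.ι e)) hx.1
        simp only [hφdef, hφ'def, hΔdef, intervalIntegral.integral_same, add_zero]
        rw [← intervalIntegral.integral_of_le hx.1] at hchain
        exact hchain
      · rw [hφdef, hφVdef]
        simp only
        rw [hΔ0 e]
      · rw [hφdef, hφVdef]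
        simp only
        rw [hΔℓ e]
    -- integrability of products with the bounded test function
    have hmulφ : ∀ e (f : ℝ → ℝ), IntegrableOn f (Ioo 0 (ℓ e)) volume →
        IntegrableOn (fun y => f y * φ e y) (Ioo 0 (ℓ e)) volume := by
      intro e f hf
      have h2 : IntegrableOn (fun y => φ e y * f y) (Ioo 0 (ℓ e)) volume :=
        hf.bdd_mul (hφcont e).aestronglyMeasurable
          (ae_of_all _ fun y => by
            rw [Real.norm_eq_abs, abs_of_nonneg (hφbdd01 e y).1]
            exact (hφbdd01 e y).2)
      exact h2.congr (ae_of_all _ fun y => mul_comm _ _)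
    -- the weak formulations with this test function
    have E1 : edgeSum G (fun e => ∫ x in Ioo 0 (ℓ e), v e x * φ e x)
        + edgeSum G (fun e => ∫ x in Ioo 0 (ℓ e), rho (p e) (u' e x) * φ' e x)
        = edgeSum G (fun e => ∫ x in Ioo 0 (ℓ e), (v e x + w e x) * φ e x)
        + vertexSum G (fun z => ω z * φV z) := hweak φ φ' φV hGSφ
    have E2 : edgeSum G (fun e => ∫ x in Ioo 0 (ℓ e), vh e x * φ e x)
        + edgeSum G (fun e => ∫ x in Ioo 0 (ℓ e), rho (p e) (ub' e x) * φ' e x)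
        = edgeSum G (fun e => ∫ x in Ioo 0 (ℓ e), (vh e x + wh e x) * φ e x)
        + vertexSum G (fun z => ωh z * φV z) := hweakh φ φ' φV hGSφ
    have hsplit1 : edgeSum G (fun e => ∫ x in Ioo 0 (ℓ e), (v e x + w e x) * φ e x)
        = edgeSum G (fun e => ∫ x in Ioo 0 (ℓ e), v e x * φ e x)
        + edgeSum G (fun e => ∫ x in Ioo 0 (ℓ e), w e x * φ e x) := by
      rw [← edgeSum_add]
      apply edgeSum_congr
      intro e
      rw [← integral_add (hmulφ e _ (hv_int e)) (hmulφ e _ (hw e))]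
      exact setIntegral_congr_fun measurableSet_Ioo (fun y _ => by ring)
    have hsplit2 : edgeSum G (fun e => ∫ x in Ioo 0 (ℓ e), (vh e x + wh e x) * φ e x)
        = edgeSum G (fun e => ∫ x in Ioo 0 (ℓ e), vh e x * φ e x)
        + edgeSum G (fun e => ∫ x in Ioo 0 (ℓ e), wh e x * φ e x) := by
      rw [← edgeSum_add]
      apply edgeSum_congr
      intro e
      rw [← integral_add (hmulφ e _ (hvh_int e)) (hmulφ e _ (hwh e))]
      exact setIntegral_congr_fun measurableSet_Ioo (fun y _ => by ring)
    -- integrability of rho * φ'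
    have hRint : ∀ e, IntegrableOn (fun x => rho (p e) (u' e x) * φ' e x)
        (Ioo 0 (ℓ e)) volume := by
      intro e
      apply Integrable.mono' (((hSob e).2.1).add (hφ'p e))
      · exact (((measurable_rho (p e)).comp_aemeasurable
          (hSob e).1.aemeasurable).mul (hφ'int e).aemeasurable.restrict).aestronglyMeasurable
      · apply ae_of_all
        intro y
        rw [Real.norm_eq_abs, abs_mul]
        calc |rho (p e) (u' e y)| * |φ' e y| ≤ |u' e y| ^ (p e - 1) * |φ' e y| :=
              mul_le_mul_of_nonneg_right (abs_rho_le (hp e) _) (abs_nonneg _)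
          _ ≤ |u' e y| ^ (p e) + |φ' e y| ^ (p e) :=
              rpow_mul_young (hp e) (abs_nonneg _) (abs_nonneg _)
    have hRinth : ∀ e, IntegrableOn (fun x => rho (p e) (ub' e x) * φ' e x)
        (Ioo 0 (ℓ e)) volume := by
      intro e
      apply Integrable.mono' (((hSobh e).2.1).add (hφ'p e))
      · exact (((measurable_rho (p e)).comp_aemeasurable
          (hSobh e).1.aemeasurable).mul (hφ'int e).aemeasurable.restrict).aestronglyMeasurable
      · apply ae_of_all
        intro y
        rw [Real.norm_eq_abs, abs_mul]
        calc |rho (p e) (ub' e y)| * |φ' e y| ≤ |ub' e y| ^ (p e - 1) * |φ' e y| :=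
              mul_le_mul_of_nonneg_right (abs_rho_le (hp e) _) (abs_nonneg _)
          _ ≤ |ub' e y| ^ (p e) + |φ' e y| ^ (p e) :=
              rpow_mul_young (hp e) (abs_nonneg _) (abs_nonneg _)
    -- monotonicity of rho: the difference term is nonnegative
    have hmon : 0 ≤ edgeSum G (fun e => ∫ x in Ioo (0:ℝ) (ℓ e),
        (rho (p e) (u' e x) - rho (p e) (ub' e x)) * φ' e x) := by
      have h0 : edgeSum G (fun _ => (0:ℝ)) = 0 := by
        unfold edgeSum; simp
      have h1 : ∀ e, (fun _ : G.E => (0:ℝ)) e ≤ (fun e => ∫ x in Ioo (0:ℝ) (ℓ e),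
          (rho (p e) (u' e x) - rho (p e) (ub' e x)) * φ' e x) e := by
        intro e
        apply setIntegral_nonneg measurableSet_Ioo
        intro y hy
        have hh1 : φ' e y = Qn' n (Δ e y) * (u' e y - ub' e y) := by
          rw [hφ'def]
          simp only
          rw [hHdIoo e y hy]
        rw [hh1]
        have hh2 := rho_mul_nonneg (hp e) (u' e y) (ub' e y)
        have hh3 := hQ'nonneg n (Δ e y)
        have hh4 : (rho (p e) (u' e y) - rho (p e) (ub' e y)) *
            (Qn' n (Δ e y) * (u' e y - ub' e y))
            = Qn' n (Δ e y) *
              ((rho (p e) (u' e y) - rho (p e) (ub' e y)) * (u' e y - ub' e y)) := by ring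
        rw [hh4]
        exact mul_nonneg hh3 hh2
      have h2' := edgeSum_le G h1
      rw [h0] at h2'
      exact h2'
    have hRdiff : edgeSum G (fun e => ∫ x in Ioo (0:ℝ) (ℓ e),
          (rho (p e) (u' e x) - rho (p e) (ub' e x)) * φ' e x)
        = edgeSum G (fun e => ∫ x in Ioo 0 (ℓ e), rho (p e) (u' e x) * φ' e x)
          - edgeSum G (fun e => ∫ x in Ioo 0 (ℓ e), rho (p e) (ub' e x) * φ' e x) := by
      rw [← edgeSum_sub]
      apply edgeSum_congr
      intro e
      rw [← integral_sub (hRint e) (hRinth e)]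
      exact setIntegral_congr_fun measurableSet_Ioo (fun y _ => by ring)
    have hWdiff : edgeSum G (fun e => ∫ x in Ioo (0:ℝ) (ℓ e), (w e x - wh e x) * φ e x)
        = edgeSum G (fun e => ∫ x in Ioo 0 (ℓ e), w e x * φ e x)
          - edgeSum G (fun e => ∫ x in Ioo 0 (ℓ e), wh e x * φ e x) := by
      rw [← edgeSum_sub]
      apply edgeSum_congr
      intro e
      rw [← integral_sub (hmulφ e _ (hw e)) (hmulφ e _ (hwh e))]
      exact setIntegral_congr_fun measurableSet_Ioo (fun y _ => by ring)
    have hΩdiff : vertexSum G (fun z => ω z * φV z) - vertexSum G (fun z => ωh z * φV z)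
        = vertexSum G (fun z => (ω z - ωh z) * φV z) := by
      rw [← vertexSum_sub]
      exact vertexSum_congr G (fun z => by ring)
    have hΩle : vertexSum G (fun z => (ω z - ωh z) * φV z)
        ≤ vertexSum G (fun z => max (ω z - ωh z) 0) := by
      apply vertexSum_le
      intro z
      have hq1 : 0 ≤ φV z := (hQ01 n _).1
      have hq2 : φV z ≤ 1 := (hQ01 n _).2
      rcases le_total 0 (ω z - ωh z) with h | h
      · calc (ω z - ωh z) * φV z ≤ (ω z - ωh z) * 1 :=
            mul_le_mul_of_nonneg_left hq2 h
          _ = ω z - ωh z := mul_one _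
          _ ≤ max (ω z - ωh z) 0 := le_max_left _ _
      · calc (ω z - ωh z) * φV z ≤ 0 := mul_nonpos_of_nonpos_of_nonneg h hq1
          _ ≤ max (ω z - ωh z) 0 := le_max_right _ _
    -- combine
    rw [hsplit1] at E1
    rw [hsplit2] at E2
    rw [hRdiff] at hmon
    have hfinal : - vertexSum G (fun z => max (ω z - ωh z) 0)
        ≤ edgeSum G (fun e => ∫ x in Ioo (0:ℝ) (ℓ e), (w e x - wh e x) * φ e x) := by
      rw [hWdiff]
      linarith [hΩle, hΩdiff, hmon, E1, E2]
    exact hfinal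
  -- pass to the limit n → ∞
  have hlimit : Tendsto (fun n : ℕ => edgeSum G
        (fun e => ∫ x in Ioo (0:ℝ) (ℓ e), (w e x - wh e x) * Qn n (Δ e x))) atTop
      (𝓝 (edgeSum G (fun e => ∫ x in Ioo (0:ℝ) (ℓ e), (w e x - wh e x) * χ e x))) := by
    apply edgeSum_tendsto
    intro e
    apply tendsto_integral_of_dominated_convergence (fun x => |w e x - wh e x|)
    · intro n
      exact ((hw e).sub (hwh e)).aestronglyMeasurable.mul
        ((hQcont n).comp (hΔcont e)).aestronglyMeasurable
    · exact ((hw e).sub (hwh e)).abs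
    · intro n
      apply ae_of_all
      intro x
      rw [Real.norm_eq_abs, abs_mul]
      calc |w e x - wh e x| * |Qn n (Δ e x)| ≤ |w e x - wh e x| * 1 := by
            apply mul_le_mul_of_nonneg_left _ (abs_nonneg _)
            rw [abs_of_nonneg (hQ01 n _).1]
            exact (hQ01 n _).2
        _ = |w e x - wh e x| := mul_one _
    · apply ae_of_all
      intro x
      have h2 : χ e x = if 0 < Δ e x then (1:ℝ) else 0 := by rw [hχdef]
      rw [h2]
      exact (hQlim (Δ e x)).const_mul (w e x - wh e x)
  have hdagger : - vertexSum G (fun z => max (ω z - ωh z) 0)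
      ≤ edgeSum G (fun e => ∫ x in Ioo (0:ℝ) (ℓ e), (w e x - wh e x) * χ e x) :=
    ge_of_tendsto hlimit (Eventually.of_forall key_n)
  -- identify the positive part integral with the integral against χ
  have hstep5 : ∀ e, ∫ x in Ioo (0:ℝ) (ℓ e), max (v e x - vh e x) 0
      = ∫ x in Ioo (0:ℝ) (ℓ e), (v e x - vh e x) * χ e x := by
    intro e
    apply integral_congr_ae
    filter_upwards [hvγ e, hvhγ e, ae_restrict_mem measurableSet_Ioo] with x h1 h2 hx
    have hΔx := hΔeq e x (Ioo_subset_Icc_self hx)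
    have h3 : χ e x = if 0 < Δ e x then (1:ℝ) else 0 := by rw [hχdef]
    rw [h3]
    split
    case isTrue hpos =>
      have h4 : ub e x < u e x := by rw [hΔx] at hpos; linarith
      have h5 : γ e (ub e x) < γ e (u e x) := (hγ e).2.1 h4
      rw [mul_one, max_eq_left (by rw [h1, h2]; linarith)]
    case isFalse hnp =>
      push_neg at hnp
      have h4 : u e x ≤ ub e x := by rw [hΔx] at hnp; linarith
      have h5 : γ e (u e x) ≤ γ e (ub e x) := ((hγ e).2.1.le_iff_le).2 h4
      rw [mul_zero, max_eq_right (by rw [h1, h2]; linarith)]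
  -- integrability against χ
  have hmulχ : ∀ e (f : ℝ → ℝ), IntegrableOn f (Ioo 0 (ℓ e)) volume →
      IntegrableOn (fun y => f y * χ e y) (Ioo 0 (ℓ e)) volume := by
    intro e f hf
    have h2 : IntegrableOn (fun y => χ e y * f y) (Ioo 0 (ℓ e)) volume :=
      hf.bdd_mul (hχmeas e).aestronglyMeasurable.restrict
        (ae_of_all _ fun y => by
          rw [Real.norm_eq_abs, abs_of_nonneg (hχ01 e y).1]
          exact (hχ01 e y).2)
    exact h2.congr (ae_of_all _ fun y => mul_comm _ _)
  -- the final per-edge estimate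
  have hstep6 : ∀ e, ∫ x in Ioo (0:ℝ) (ℓ e), (v e x - vh e x) * χ e x
      ≤ (∫ x in Ioo (0:ℝ) (ℓ e), max (v e x - vh e x + lam * (w e x - wh e x)) 0)
        - lam * ∫ x in Ioo (0:ℝ) (ℓ e), (w e x - wh e x) * χ e x := by
    intro e
    have hint1 : IntegrableOn (fun y => (v e y - vh e y) * χ e y) (Ioo 0 (ℓ e)) volume :=
      hmulχ e _ ((hv_int e).sub (hvh_int e))
    have hint2 : IntegrableOn (fun y => (w e y - wh e y) * χ e y) (Ioo 0 (ℓ e)) volume :=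
      hmulχ e _ ((hw e).sub (hwh e))
    have hintc : IntegrableOn
        (fun x => (v e x - vh e x + lam * (w e x - wh e x)) * χ e x) (Ioo 0 (ℓ e)) volume :=
      hmulχ e _ (((hv_int e).sub (hvh_int e)).add (((hw e).sub (hwh e)).const_mul lam))
    have hpp : IntegrableOn (fun x => max (v e x - vh e x + lam * (w e x - wh e x)) 0)
        (Ioo 0 (ℓ e)) volume :=
      Integrable.pos_part (((hv_int e).sub (hvh_int e)).add (((hw e).sub (hwh e)).const_mul lam))
    have hkey : ∫ x in Ioo (0:ℝ) (ℓ e), (v e x - vh e x + lam * (w e x - wh e x)) * χ e x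
        ≤ ∫ x in Ioo (0:ℝ) (ℓ e), max (v e x - vh e x + lam * (w e x - wh e x)) 0 := by
      apply integral_mono hintc hpp
      intro x
      have h3 : χ e x = if 0 < Δ e x then (1:ℝ) else 0 := by rw [hχdef]
      simp only [h3]
      split
      · rw [mul_one]; exact le_max_left _ _
      · rw [mul_zero]; exact le_max_right _ _
    have hsplit : ∫ x in Ioo (0:ℝ) (ℓ e), (v e x - vh e x + lam * (w e x - wh e x)) * χ e x
        = (∫ x in Ioo (0:ℝ) (ℓ e), (v e x - vh e x) * χ e x)
          + lam * ∫ x in Ioo (0:ℝ) (ℓ e), (w e x - wh e x) * χ e x := by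
      have hcm : ∫ x in Ioo (0:ℝ) (ℓ e), lam * ((w e x - wh e x) * χ e x)
          = lam * ∫ x in Ioo (0:ℝ) (ℓ e), (w e x - wh e x) * χ e x := by
        simpa using integral_smul lam (fun x => (w e x - wh e x) * χ e x)
      rw [← hcm, ← integral_add hint1 (hint2.const_mul lam)]
      exact setIntegral_congr_fun measurableSet_Ioo (fun y _ => by ring)
    linarith
  -- final assembly
  calc edgeSum G (fun e => ∫ x in Ioo (0:ℝ) (ℓ e), max (v e x - vh e x) 0)
      = edgeSum G (fun e => ∫ x in Ioo (0:ℝ) (ℓ e), (v e x - vh e x) * χ e x) :=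
        edgeSum_congr G hstep5
    _ ≤ edgeSum G (fun e =>
          (∫ x in Ioo (0:ℝ) (ℓ e), max (v e x - vh e x + lam * (w e x - wh e x)) 0)
          - lam * ∫ x in Ioo (0:ℝ) (ℓ e), (w e x - wh e x) * χ e x) :=
        edgeSum_le G hstep6
    _ = edgeSum G (fun e =>
          ∫ x in Ioo (0:ℝ) (ℓ e), max (v e x - vh e x + lam * (w e x - wh e x)) 0)
        - lam * edgeSum G (fun e => ∫ x in Ioo (0:ℝ) (ℓ e), (w e x - wh e x) * χ e x) := by
        rw [edgeSum_sub, edgeSum_const_mul]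
    _ ≤ edgeSum G (fun e =>
          ∫ x in Ioo (0:ℝ) (ℓ e), max (v e x - vh e x + lam * (w e x - wh e x)) 0)
        + lam * vertexSum G (fun z => max (ω z - ωh z) 0) := by
        have h6 := mul_le_mul_of_nonneg_left hdagger hlam.le
        rw [mul_neg] at h6
        linarith
end
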